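/- arXiv:0911.5377 — 5 statements merged into one kernel-verified Lean document; each statement's English description precedes it below -/
import Mathlib

section
/- Let 0 < p < 1 and 0 < q < 1. There is no extractor; that is, there is no measurable function f : {0,1}^ℕ → {0,1} such that, when X ~ Bernoulli(p)^ℕ and Y ~ Bernoulli(q)^ℕ are independent, f(X) ~ Bernoulli(1/2) and f(X) is independent of the random sequence max(X,Y). -/
open MeasureTheory ProbabilityTheory

/-- The Bernoulli measure on `Bool` assigning mass `r` to `true`. -/
noncomputable def bernoulliMeasure (r : ℝ) : Measure Bool :=
  ENNReal.ofReal r • Measure.dirac true + ENNReal.ofReal (1 - r) • Measure.dirac false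

/-- `μ` is the product of Bernoulli(`r`) measures over the index set `I`:
it is a probability measure whose finite-dimensional marginals are i.i.d. Bernoulli(`r`). -/
def IsBernoulliProduct {I : Type*} (r : ℝ) (μ : Measure (I → Bool)) : Prop :=
  IsProbabilityMeasure μ ∧
    ∀ (s : Finset I) (b : I → Bool),
      μ {x | ∀ i ∈ s, x i = b i} =
        ∏ i ∈ s, (if b i then ENNReal.ofReal r else ENNReal.ofReal (1 - r))

/-- The all-false cylinder on a finite set of coordinates. -/
def zeroCyl (S : Finset ℕ) : Set (ℕ → Bool) := {x | ∀ i ∈ S, x i = false}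

lemma measurableSet_zeroCyl (S : Finset ℕ) : MeasurableSet (zeroCyl S) := by
  have : zeroCyl S = ⋂ i ∈ (S : Set ℕ), (fun x : ℕ → Bool => x i) ⁻¹' {false} := by
    ext x; simp [zeroCyl]
  rw [this]
  exact MeasurableSet.biInter (S : Set ℕ).to_countable
    (fun i _ => measurable_pi_apply i (measurableSet_singleton false))

lemma generateFrom_zeroCyl :
    MeasurableSpace.pi (X := fun _ : ℕ => Bool) =
      MeasurableSpace.generateFrom {s | ∃ S : Finset ℕ, s = zeroCyl S} := by
  refine le_antisymm ?_ ?_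
  · rw [MeasurableSpace.pi]
    refine iSup_le fun i => ?_
    rw [MeasurableSpace.comap_le_iff_le_map]
    intro s _
    show MeasurableSet[MeasurableSpace.generateFrom _] ((fun x : ℕ → Bool => x i) ⁻¹' s)
    have hmem : MeasurableSet[MeasurableSpace.generateFrom
        {s | ∃ S : Finset ℕ, s = zeroCyl S}] (zeroCyl {i}) :=
      MeasurableSpace.measurableSet_generateFrom ⟨{i}, rfl⟩
    by_cases ht : true ∈ s <;> by_cases hf : false ∈ s
    · have : (fun x : ℕ → Bool => x i) ⁻¹' s = Set.univ := by
        ext x; simp only [Set.mem_preimage, Set.mem_univ, iff_true]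
        cases h : x i
        · exact hf
        · exact ht
      rw [this]; exact @MeasurableSet.univ _ (MeasurableSpace.generateFrom _)
    · have : (fun x : ℕ → Bool => x i) ⁻¹' s = (zeroCyl {i})ᶜ := by
        ext x; simp only [Set.mem_preimage, Set.mem_compl_iff, zeroCyl,
          Finset.mem_singleton, Set.mem_setOf_eq]
        cases h : x i <;> simp_all
      rw [this]; exact hmem.compl
    · have : (fun x : ℕ → Bool => x i) ⁻¹' s = zeroCyl {i} := by
        ext x; simp only [Set.mem_preimage, zeroCyl, Finset.mem_singleton, Set.mem_setOf_eq]
        cases h : x i <;> simp_all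
      rw [this]; exact hmem
    · have : (fun x : ℕ → Bool => x i) ⁻¹' s = ∅ := by
        ext x; simp only [Set.mem_preimage, Set.mem_empty_iff_false, iff_false]
        cases h : x i
        · exact hf
        · exact ht
      rw [this]; exact @MeasurableSet.empty _ (MeasurableSpace.generateFrom _)
  · refine MeasurableSpace.generateFrom_le ?_
    rintro s ⟨S, rfl⟩
    exact measurableSet_zeroCyl S

lemma isPiSystem_zeroCyl : IsPiSystem {s : Set (ℕ → Bool) | ∃ S : Finset ℕ, s = zeroCyl S} := by
  rintro s ⟨S, rfl⟩ t ⟨T, rfl⟩ _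
  refine ⟨S ∪ T, ?_⟩
  ext x
  simp only [Set.mem_inter_iff, zeroCyl, Set.mem_setOf_eq, Finset.mem_union]
  constructor
  · rintro ⟨h1, h2⟩ i (hi | hi)
    · exact h1 i hi
    · exact h2 i hi
  · intro h
    exact ⟨fun i hi => h i (Or.inl hi), fun i hi => h i (Or.inr hi)⟩

/-- There is no extractor: no measurable `f : {0,1}^ℕ → {0,1}` such that, for independent
`X ~ Bernoulli(p)^ℕ` and `Y ~ Bernoulli(q)^ℕ`, `f(X) ~ Bernoulli(1/2)` and `f(X)` is
independent of the coordinatewise maximum `max(X,Y)`. -/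
theorem no_extractor (p q : ℝ) (hp : 0 < p) (hp1 : p < 1) (hq : 0 < q) (hq1 : q < 1)
    (μp μq : Measure (ℕ → Bool))
    (hμp : IsBernoulliProduct p μp) (hμq : IsBernoulliProduct q μq) :
    ¬ ∃ f : (ℕ → Bool) → Bool, Measurable f ∧
      (μp.prod μq).map (fun ω => f ω.1) = _root_.bernoulliMeasure (1/2) ∧
      IndepFun (fun ω => f ω.1) (fun ω i => max (ω.1 i) (ω.2 i)) (μp.prod μq) := by
  rintro ⟨f, hf, hmap, hind⟩
  haveI : IsProbabilityMeasure μp := hμp.1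
  haveI : IsProbabilityMeasure μq := hμq.1
  set μ := μp.prod μq with hμdef
  set A : Set (ℕ → Bool) := f ⁻¹' {true} with hA
  have hAmeas : MeasurableSet A := hf (measurableSet_singleton true)
  -- the preimage of {true} under `f ∘ fst` is a rectangle
  have hpre1 : (fun ω : (ℕ → Bool) × (ℕ → Bool) => f ω.1) ⁻¹' {true} = A ×ˢ Set.univ := by
    ext ω; simp [hA, Set.mem_prod]
  -- μ (f ∘ fst = true) = μp A
  have hμF : μ ((fun ω : (ℕ → Bool) × (ℕ → Bool) => f ω.1) ⁻¹' {true}) = μp A := by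
    rw [hpre1, Measure.prod_prod, measure_univ, mul_one]
  -- μp A = 1/2
  have hμpA : μp A = ENNReal.ofReal (1/2) := by
    have hg : Measurable (fun ω : (ℕ → Bool) × (ℕ → Bool) => f ω.1) := hf.comp measurable_fst
    have := congrArg (fun ν : Measure Bool => ν {true}) hmap
    simp only [Measure.map_apply hg (measurableSet_singleton true)] at this
    rw [hμF] at this
    rw [this]
    simp [_root_.bernoulliMeasure, Measure.dirac_apply]
  -- key: for every finite S, μp (A ∩ zeroCyl S) = (1/2) * μp (zeroCyl S)
  have key : ∀ S : Finset ℕ, μp (A ∩ zeroCyl S) = ENNReal.ofReal (1/2) * μp (zeroCyl S) := by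
    intro S
    have hmax : (fun ω : (ℕ → Bool) × (ℕ → Bool) => fun i => max (ω.1 i) (ω.2 i)) ⁻¹'
        (zeroCyl S) = zeroCyl S ×ˢ zeroCyl S := by
      ext ω
      simp only [Set.mem_preimage, zeroCyl, Set.mem_setOf_eq, Set.mem_prod]
      constructor
      · intro h
        constructor <;> intro i hi <;>
          · have := h i hi
            revert this
            cases ω.1 i <;> cases ω.2 i <;> decide
      · rintro ⟨h1, h2⟩ i hi
        rw [h1 i hi, h2 i hi]
        decide
    have hindeq := hind.measure_inter_preimage_eq_mul {true} (zeroCyl S)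
      (measurableSet_singleton true) (measurableSet_zeroCyl S)
    rw [hμF, hμpA, hpre1, hmax, Set.prod_inter_prod, Set.univ_inter,
      Measure.prod_prod, Measure.prod_prod] at hindeq
    -- hindeq : μp (A ∩ zeroCyl S) * μq (zeroCyl S) = ofReal (1/2) * (μp ... * μq ...)
    have hq0 : μq (zeroCyl S) ≠ 0 := by
      have := hμq.2 S (fun _ => false)
      have heq : μq (zeroCyl S) = ENNReal.ofReal (1 - q) ^ S.card := by
        rw [show zeroCyl S = {x | ∀ i ∈ S, x i = (fun _ => false) i} from rfl, this]
        simp [Finset.prod_const]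
      rw [heq]
      exact pow_ne_zero _ (by simp [ENNReal.ofReal_eq_zero]; linarith)
    have hqtop : μq (zeroCyl S) ≠ ⊤ := measure_ne_top _ _
    have := congrArg (fun z => z * (μq (zeroCyl S))⁻¹) hindeq
    simp only [mul_assoc, ENNReal.mul_inv_cancel hq0 hqtop, mul_one] at this
    exact this
  -- extend to all measurable sets via π-systems
  have hext : μp.restrict A = (ENNReal.ofReal (1/2)) • μp := by
    refine ext_of_generate_finite _ generateFrom_zeroCyl isPiSystem_zeroCyl ?_ ?_
    · rintro s ⟨S, rfl⟩
      rw [Measure.restrict_apply (measurableSet_zeroCyl S), Set.inter_comm, key S]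
      simp
    · rw [Measure.restrict_apply_univ]
      simp [hμpA]
  have hfinal := congrArg (fun ν : Measure (ℕ → Bool) => ν A) hext
  simp only [Measure.restrict_apply hAmeas, Set.inter_self, Measure.smul_apply,
    smul_eq_mul, hμpA] at hfinal
  rw [← ENNReal.ofReal_mul (by norm_num)] at hfinal
  have := ENNReal.ofReal_eq_ofReal_iff (by norm_num) (by norm_num) |>.1 hfinal
  norm_num at this
end

section
/- Let 0 < p < 1, 0 < q < 1 and set p' = p + q − pq. Suppose e : {0,1}^ℕ → {0,1}^ℕ is measurable and satisfies: when X ~ Bernoulli(p)^ℕ and Y ~ Bernoulli(q)^ℕ are independent, e(X) ~ Bernoulli(q)^ℕ and e(X) is independent of max(X,Y). Define F : {0,1}^{ℕ×ℕ} → {0,1}^{ℕ×ℕ} by F(x)(i,j) = max( x(i,j), e( x(i+1,·) )(j) ). Then the pushforward of Bernoulli(p)^{ℕ×ℕ} under F is Bernoulli(p')^{ℕ×ℕ}; in particular, since F(x)(i,j) ≥ x(i,j) always, F is a discrete thickening from density p to density p' on {0,1}^{ℕ×ℕ}. -/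
open MeasureTheory ProbabilityTheory

namespace BPAux

noncomputable def bf (r : ℝ) (c : Bool) : ENNReal :=
  if c then ENNReal.ofReal r else ENNReal.ofReal (1 - r)

variable {I J : Type*}

def cyl (s : Finset I) (b : I → Bool) : Set (I → Bool) := {x | ∀ i ∈ s, x i = b i}

lemma measurableSet_cyl (s : Finset I) (b : I → Bool) : MeasurableSet (cyl s b) := by
  have h : cyl s b = ⋂ i ∈ s, (fun x : I → Bool => x i) ⁻¹' {b i} := by
    ext x; simp [cyl]
  rw [h]
  exact MeasurableSet.biInter s.countable_toSet
    (fun i _ => (measurable_pi_apply i) (measurableSet_singleton _))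

def cylSets (I : Type*) : Set (Set (I → Bool)) := {S | ∃ s b, S = cyl s b}

lemma isPiSystem_cylSets : IsPiSystem (cylSets I) := by
  classical
  rintro _ ⟨s, b, rfl⟩ _ ⟨t, c, rfl⟩ ⟨x₀, hx₀s, hx₀t⟩
  refine ⟨s ∪ t, fun i => if i ∈ s then b i else c i, ?_⟩
  ext x
  simp only [cyl, Set.mem_inter_iff, Set.mem_setOf_eq]
  constructor
  · rintro ⟨hxs, hxt⟩ i hi
    by_cases h' : i ∈ s
    · rw [if_pos h']; exact hxs i h'
    · rw [if_neg h']
      exact hxt i ((Finset.mem_union.mp hi).resolve_left h')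
  · intro h
    constructor
    · intro i hi
      have := h i (Finset.mem_union_left _ hi)
      rwa [if_pos hi] at this
    · intro i hi
      have := h i (Finset.mem_union_right _ hi)
      by_cases h' : i ∈ s
      · rw [if_pos h'] at this
        rw [this, ← hx₀s i h', hx₀t i hi]
      · rwa [if_neg h'] at this

lemma generateFrom_cylSets :
    (MeasurableSpace.pi : MeasurableSpace (I → Bool)) =
      MeasurableSpace.generateFrom (cylSets I) := by
  apply le_antisymm
  · rw [MeasurableSpace.pi]
    refine iSup_le fun i => MeasurableSpace.comap_le_iff_le_map.mpr fun U _ => ?_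
    show MeasurableSet[MeasurableSpace.generateFrom (cylSets I)]
      ((fun x : I → Bool => x i) ⁻¹' U)
    classical
    have h : (fun x : I → Bool => x i) ⁻¹' U =
        (if true ∈ U then cyl {i} (fun _ => true) else ∅) ∪
        (if false ∈ U then cyl {i} (fun _ => false) else ∅) := by
      ext x
      by_cases hU : true ∈ U <;> by_cases hU' : false ∈ U <;>
        cases hx : x i <;> simp [cyl, hx, hU, hU']
    rw [h]
    have hcyl : ∀ (c : Bool), MeasurableSet[MeasurableSpace.generateFrom (cylSets I)]
        (cyl {i} (fun _ => c)) := fun c =>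
      MeasurableSpace.measurableSet_generateFrom ⟨{i}, fun _ => c, rfl⟩
    have hemp : MeasurableSet[MeasurableSpace.generateFrom (cylSets I)]
        (∅ : Set (I → Bool)) := @MeasurableSet.empty (I → Bool) (MeasurableSpace.generateFrom (cylSets I))
    apply MeasurableSet.union <;> split <;> first | exact hcyl _ | exact hemp
  · refine MeasurableSpace.generateFrom_le ?_
    rintro _ ⟨s, b, rfl⟩
    exact measurableSet_cyl s b

lemma isBP_iff {r : ℝ} {μ : Measure (I → Bool)} :
    IsBernoulliProduct r μ ↔
      (IsProbabilityMeasure μ ∧ ∀ (s : Finset I) (b : I → Bool),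
        μ (cyl s b) = ∏ i ∈ s, bf r (b i)) := Iff.rfl

lemma isBP_unique {r : ℝ} {μ ν : Measure (I → Bool)}
    (hμ : IsBernoulliProduct r μ) (hν : IsBernoulliProduct r ν) : μ = ν := by
  haveI := hμ.1; haveI := hν.1
  refine ext_of_generate_finite (cylSets I) generateFrom_cylSets isPiSystem_cylSets ?_ (by
    rw [measure_univ, measure_univ])
  rintro _ ⟨s, b, rfl⟩
  exact (hμ.2 s b).trans (hν.2 s b).symm

lemma measurable_reindex (g : J → I) :
    Measurable (fun x : I → Bool => (fun j => x (g j))) :=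
  measurable_pi_lambda _ fun j => measurable_pi_apply _

lemma isBP_map_reindex [Nonempty J] {r : ℝ} {μ : Measure (I → Bool)}
    (hμ : IsBernoulliProduct r μ) (g : J → I) (hg : Function.Injective g) :
    IsBernoulliProduct r (μ.map (fun x => fun j => x (g j))) := by
  classical
  haveI := hμ.1
  have hm := measurable_reindex (I := I) g
  refine ⟨Measure.isProbabilityMeasure_map hm.aemeasurable, fun s b => ?_⟩
  show (μ.map (fun x => fun j => x (g j))) (cyl s b) = _
  rw [Measure.map_apply hm (measurableSet_cyl s b)]
  have h : (fun x : I → Bool => fun j => x (g j)) ⁻¹' (cyl s b) =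
      cyl (s.image g) (fun i => b (Function.invFun g i)) := by
    ext x
    simp only [cyl, Set.mem_setOf_eq, Set.mem_preimage, Finset.mem_image]
    constructor
    · rintro h _ ⟨j, hj, rfl⟩
      rw [Function.leftInverse_invFun hg j]
      exact h j hj
    · intro h j hj
      have := h (g j) ⟨j, hj, rfl⟩
      rwa [Function.leftInverse_invFun hg j] at this
  rw [h]
  rw [show μ (cyl (s.image g) fun i => b (Function.invFun g i)) = _ from hμ.2 _ _]
  rw [Finset.prod_image (fun a _ a' _ h => hg h)]
  exact Finset.prod_congr rfl fun j _ => by rw [Function.leftInverse_invFun hg j]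

lemma measurableSet_eqBool {α : Type*} [MeasurableSpace α] {f : α → Bool} (hf : Measurable f)
    (c : Bool) : MeasurableSet {a | f a = c} := hf (measurableSet_singleton c)

lemma measurable_boolMax {α : Type*} [MeasurableSpace α] {f g : α → Bool} (hf : Measurable f)
    (hg : Measurable g) : Measurable (fun a => max (f a) (g a)) :=
  (measurable_of_countable (fun bc : Bool × Bool => max bc.1 bc.2)).comp (hf.prodMk hg)

lemma mask_pos_preimage (φ : I → Bool) (s : Finset I) (b : I → Bool) :
    (fun x : I → Bool => fun i => if φ i then x i else false) ⁻¹' cyl s b =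
      if ∀ i ∈ s, φ i = false → b i = false then
        cyl (s.filter fun i => φ i = true) b else (∅ : Set (I → Bool)) := by
  classical
  split_ifs with h
  · ext x
    simp only [cyl, Set.mem_preimage, Set.mem_setOf_eq, Finset.mem_filter]
    constructor
    · rintro hx i ⟨his, hφ⟩
      have := hx i his
      rwa [if_pos (by simp [hφ])] at this
    · intro hx i his
      by_cases hφ : φ i = true
      · rw [if_pos (by simp [hφ])]; exact hx i ⟨his, hφ⟩
      · rw [if_neg (by simp_all)]
        exact (h i his (by simpa using hφ)).symm
  · push_neg at h
    obtain ⟨i, his, hφ, hb⟩ := h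
    ext x
    simp only [cyl, Set.mem_preimage, Set.mem_setOf_eq, Set.mem_empty_iff_false, iff_false]
    intro hx
    have := hx i his
    rw [if_neg (by simp [hφ])] at this
    exact hb this.symm

lemma mask_neg_preimage (φ : I → Bool) (s : Finset I) (b : I → Bool) :
    (fun x : I → Bool => fun i => if φ i then false else x i) ⁻¹' cyl s b =
      if ∀ i ∈ s, φ i = true → b i = false then
        cyl (s.filter fun i => φ i = false) b else (∅ : Set (I → Bool)) := by
  classical
  split_ifs with h
  · ext x
    simp only [cyl, Set.mem_preimage, Set.mem_setOf_eq, Finset.mem_filter]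
    constructor
    · rintro hx i ⟨his, hφ⟩
      have := hx i his
      rwa [if_neg (by simp [hφ])] at this
    · intro hx i his
      by_cases hφ : φ i = true
      · rw [if_pos (by simp [hφ])]
        exact (h i his hφ).symm
      · rw [if_neg (by simp_all)]
        exact hx i ⟨his, by simpa using hφ⟩
  · push_neg at h
    obtain ⟨i, his, hφ, hb⟩ := h
    ext x
    simp only [cyl, Set.mem_preimage, Set.mem_setOf_eq, Set.mem_empty_iff_false, iff_false]
    intro hx
    have := hx i his
    rw [if_pos (by simp [hφ])] at this
    exact hb this.symm

lemma cyl_inter {r : ℝ} {μ : Measure (I → Bool)} (hμ : IsBernoulliProduct r μ)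
    (s t : Finset I) (b c : I → Bool) (hdisj : ∀ i ∈ s, i ∉ t) :
    μ (cyl s b ∩ cyl t c) = μ (cyl s b) * μ (cyl t c) := by
  classical
  have h : cyl s b ∩ cyl t c = cyl (s ∪ t) (fun i => if i ∈ s then b i else c i) := by
    ext x
    simp only [cyl, Set.mem_inter_iff, Set.mem_setOf_eq]
    constructor
    · rintro ⟨hxs, hxt⟩ i hi
      by_cases h' : i ∈ s
      · rw [if_pos h']; exact hxs i h'
      · rw [if_neg h']
        exact hxt i ((Finset.mem_union.mp hi).resolve_left h')
    · intro hx
      constructor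
      · intro i hi
        have := hx i (Finset.mem_union_left _ hi)
        rwa [if_pos hi] at this
      · intro i hi
        have := hx i (Finset.mem_union_right _ hi)
        rwa [if_neg (fun h' => hdisj i h' hi)] at this
  rw [h, show μ (cyl (s ∪ t) _) = _ from hμ.2 _ _,
    show μ (cyl s b) = _ from hμ.2 _ _, show μ (cyl t c) = _ from hμ.2 _ _,
    Finset.prod_union (Finset.disjoint_left.mpr hdisj)]
  congr 1
  · exact Finset.prod_congr rfl fun i hi => by rw [if_pos hi]
  · exact Finset.prod_congr rfl fun i hi => by rw [if_neg (fun h' => hdisj i h' hi)]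

lemma measurable_mask_pos (φ : I → Bool) :
    Measurable (fun x : I → Bool => fun i => if φ i then x i else false) :=
  measurable_pi_lambda _ fun i => by
    split
    · exact measurable_pi_apply i
    · exact measurable_const

lemma measurable_mask_neg (φ : I → Bool) :
    Measurable (fun x : I → Bool => fun i => if φ i then false else x i) :=
  measurable_pi_lambda _ fun i => by
    split
    · exact measurable_const
    · exact measurable_pi_apply i

lemma indepFun_mask {r : ℝ} {μ : Measure (I → Bool)} (hμ : IsBernoulliProduct r μ)
    (φ : I → Bool) :
    IndepFun (fun x : I → Bool => fun i => if φ i then x i else false)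
      (fun x : I → Bool => fun i => if φ i then false else x i) μ := by
  classical
  haveI := hμ.1
  have hm₁ := measurable_mask_pos (I := I) φ
  have hm₂ := measurable_mask_neg (I := I) φ
  have gen1 : MeasurableSpace.comap (fun x : I → Bool => fun i => if φ i then x i else false)
        MeasurableSpace.pi =
      MeasurableSpace.generateFrom
        {S | ∃ t ∈ cylSets I,
          (fun x : I → Bool => fun i => if φ i then x i else false) ⁻¹' t = S} := by
    conv_lhs => rw [generateFrom_cylSets]
    rw [MeasurableSpace.comap_generateFrom]
    rfl
  have gen2 : MeasurableSpace.comap (fun x : I → Bool => fun i => if φ i then false else x i)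
        MeasurableSpace.pi =
      MeasurableSpace.generateFrom
        {S | ∃ t ∈ cylSets I,
          (fun x : I → Bool => fun i => if φ i then false else x i) ⁻¹' t = S} := by
    conv_lhs => rw [generateFrom_cylSets]
    rw [MeasurableSpace.comap_generateFrom]
    rfl
  have key : IndepSets
      {S | ∃ t ∈ cylSets I,
        (fun x : I → Bool => fun i => if φ i then x i else false) ⁻¹' t = S}
      {S | ∃ t ∈ cylSets I,
        (fun x : I → Bool => fun i => if φ i then false else x i) ⁻¹' t = S} μ := by
    rw [IndepSets_iff]
    rintro _ _ ⟨_, ⟨s, b, rfl⟩, rfl⟩ ⟨_, ⟨t, c, rfl⟩, rfl⟩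
    rw [mask_pos_preimage, mask_neg_preimage]
    split_ifs with h1 h2
    · apply cyl_inter hμ
      intro i hi hi'
      rw [Finset.mem_filter] at hi hi'
      rw [hi.2] at hi'
      exact absurd hi'.2 (by simp)
    · simp
    · simp
    · simp
  exact IndepSets.indep hm₁.comap_le hm₂.comap_le
    (isPiSystem_cylSets.comap _) (isPiSystem_cylSets.comap _) gen1 gen2 key

lemma bool_max_false {x y : Bool} : max x y = false ↔ x = false ∧ y = false := by
  cases x <;> cases y <;> decide

lemma bool_max_true {x y : Bool} : max x y = true ↔ x = true ∨ y = true := by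
  cases x <;> cases y <;> decide

def mSet (t u v : Finset ℕ) (c a d : ℕ → Bool) : Set ((ℕ → Bool) × (ℕ → Bool)) :=
  {ω | (∀ j ∈ t, max (ω.1 j) (ω.2 j) = c j) ∧ (∀ i ∈ u, ω.1 i = a i) ∧ (∀ i ∈ v, ω.2 i = d i)}

lemma measurableSet_mSet (t u v : Finset ℕ) (c a d : ℕ → Bool) :
    MeasurableSet (mSet t u v c a d) := by
  have h1 : ∀ j : ℕ, Measurable fun ω : (ℕ → Bool) × (ℕ → Bool) => max (ω.1 j) (ω.2 j) :=
    fun j => measurable_boolMax ((measurable_pi_apply j).comp measurable_fst)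
      ((measurable_pi_apply j).comp measurable_snd)
  have h : mSet t u v c a d =
      ((⋂ j ∈ t, {ω : (ℕ → Bool) × (ℕ → Bool) | max (ω.1 j) (ω.2 j) = c j}) ∩
        (⋂ i ∈ u, {ω : (ℕ → Bool) × (ℕ → Bool) | ω.1 i = a i})) ∩
        (⋂ i ∈ v, {ω : (ℕ → Bool) × (ℕ → Bool) | ω.2 i = d i}) := by
    ext ω; simp [mSet]; tauto
  rw [h]
  refine MeasurableSet.inter (MeasurableSet.inter ?_ ?_) ?_
  · exact MeasurableSet.biInter t.countable_toSet fun j _ => measurableSet_eqBool (h1 j) (c j)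
  · exact MeasurableSet.biInter u.countable_toSet fun i _ =>
      measurableSet_eqBool ((measurable_pi_apply i).comp measurable_fst) (a i)
  · exact MeasurableSet.biInter v.countable_toSet fun i _ =>
      measurableSet_eqBool ((measurable_pi_apply i).comp measurable_snd) (d i)

lemma prod_bf_update (r : ℝ) (u : Finset ℕ) (a : ℕ → Bool) {j : ℕ} (hj : j ∉ u) (val : Bool) :
    ∏ i ∈ u, bf r (Function.update a j val i) = ∏ i ∈ u, bf r (a i) :=
  Finset.prod_congr rfl fun i hi => by
    rw [Function.update_of_ne (ne_of_mem_of_not_mem hi hj)]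

lemma bf_false_eq {p q : ℝ} (hp1 : p ≤ 1) :
    bf (p + q - p * q) false = bf p false * bf q false := by
  show ENNReal.ofReal _ = ENNReal.ofReal _ * ENNReal.ofReal _
  rw [← ENNReal.ofReal_mul (by linarith : (0:ℝ) ≤ 1 - p)]
  congr 1; ring

lemma bf_true_eq {p q : ℝ} (hp0 : 0 ≤ p) (hp1 : p ≤ 1) (hq0 : 0 ≤ q) :
    bf (p + q - p * q) true = bf p true + bf p false * bf q true := by
  show ENNReal.ofReal _ = ENNReal.ofReal _ + ENNReal.ofReal _ * ENNReal.ofReal _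
  rw [show p + q - p * q = p + (1 - p) * q by ring,
    ENNReal.ofReal_add hp0 (mul_nonneg (by linarith) hq0),
    ENNReal.ofReal_mul (by linarith)]

lemma maxCyl {p q : ℝ} (hp0 : 0 ≤ p) (hp1 : p ≤ 1) (hq0 : 0 ≤ q)
    {μ ν : Measure (ℕ → Bool)} (hμ : IsBernoulliProduct p μ) (hν : IsBernoulliProduct q ν)
    (t : Finset ℕ) (c : ℕ → Bool) :
    ∀ (u v : Finset ℕ) (a d : ℕ → Bool), (∀ j ∈ t, j ∉ u) → (∀ j ∈ t, j ∉ v) →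
      (μ.prod ν) (mSet t u v c a d) =
        (∏ j ∈ t, bf (p + q - p * q) (c j)) *
          ((∏ i ∈ u, bf p (a i)) * (∏ i ∈ v, bf q (d i))) := by
  classical
  haveI := hμ.1
  haveI := hν.1
  induction t using Finset.induction_on with
  | empty =>
    intro u v a d _ _
    have h : mSet ∅ u v c a d = cyl u a ×ˢ cyl v d := by
      ext ω; simp [mSet, cyl, Set.mem_prod]
    rw [h, Measure.prod_prod, show μ (cyl u a) = _ from hμ.2 _ _,
      show ν (cyl v d) = _ from hν.2 _ _]
    simp [bf]
  | @insert j t' hj ih =>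
    intro u v a d hu hv
    have hju : j ∉ u := hu j (Finset.mem_insert_self j t')
    have hjv : j ∉ v := hv j (Finset.mem_insert_self j t')
    have htu : ∀ i ∈ t', i ∉ u := fun i hi => hu i (Finset.mem_insert_of_mem hi)
    have htv : ∀ i ∈ t', i ∉ v := fun i hi => hv i (Finset.mem_insert_of_mem hi)
    have htu' : ∀ i ∈ t', i ∉ insert j u := fun i hi h =>
      (Finset.mem_insert.mp h).elim (ne_of_mem_of_not_mem hi hj) (htu i hi)
    have htv' : ∀ i ∈ t', i ∉ insert j v := fun i hi h =>
      (Finset.mem_insert.mp h).elim (ne_of_mem_of_not_mem hi hj) (htv i hi)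
    cases hc : c j with
    | false =>
      have hset : mSet (insert j t') u v c a d =
          mSet t' (insert j u) (insert j v) c (Function.update a j false)
            (Function.update d j false) := by
        ext ω
        simp only [mSet, Set.mem_setOf_eq, Finset.mem_insert]
        constructor
        · rintro ⟨h1, h2, h3⟩
          have hmax := h1 j (Or.inl rfl)
          rw [hc] at hmax
          obtain ⟨hx, hy⟩ := bool_max_false.mp hmax
          refine ⟨fun i hi => h1 i (Or.inr hi), ?_, ?_⟩
          · rintro i (hij | hi)
            · subst hij; rw [Function.update_self]; exact hx
            · rw [Function.update_of_ne (ne_of_mem_of_not_mem hi hju)]; exact h2 i hi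
          · rintro i (hij | hi)
            · subst hij; rw [Function.update_self]; exact hy
            · rw [Function.update_of_ne (ne_of_mem_of_not_mem hi hjv)]; exact h3 i hi
        · rintro ⟨h1, h2, h3⟩
          refine ⟨?_, fun i hi => ?_, fun i hi => ?_⟩
          · rintro i (hij | hi)
            · subst hij
              have hx := h2 i (Or.inl rfl); rw [Function.update_self] at hx
              have hy := h3 i (Or.inl rfl); rw [Function.update_self] at hy
              rw [hx, hy, hc]; rfl
            · exact h1 i hi
          · have := h2 i (Or.inr hi)
            rwa [Function.update_of_ne (ne_of_mem_of_not_mem hi hju)] at this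
          · have := h3 i (Or.inr hi)
            rwa [Function.update_of_ne (ne_of_mem_of_not_mem hi hjv)] at this
      rw [hset, ih _ _ _ _ htu' htv']
      rw [Finset.prod_insert hj, Finset.prod_insert hju, Finset.prod_insert hjv,
        Function.update_self, Function.update_self,
        prod_bf_update p u a hju false, prod_bf_update q v d hjv false,
        hc, bf_false_eq hp1]
      ring
    | true =>
      have hset : mSet (insert j t') u v c a d =
          mSet t' (insert j u) v c (Function.update a j true) d ∪
          mSet t' (insert j u) (insert j v) c (Function.update a j false)
            (Function.update d j true) := by
        ext ω
        simp only [mSet, Set.mem_setOf_eq, Finset.mem_insert, Set.mem_union]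
        constructor
        · rintro ⟨h1, h2, h3⟩
          have hmax := h1 j (Or.inl rfl)
          rw [hc] at hmax
          cases hx : ω.1 j with
          | true =>
            left
            refine ⟨fun i hi => h1 i (Or.inr hi), ?_, h3⟩
            rintro i (hij | hi)
            · subst hij; rw [Function.update_self]; exact hx
            · rw [Function.update_of_ne (ne_of_mem_of_not_mem hi hju)]; exact h2 i hi
          | false =>
            right
            have hy : ω.2 j = true := (bool_max_true.mp hmax).resolve_left (by simp [hx])
            refine ⟨fun i hi => h1 i (Or.inr hi), ?_, ?_⟩
            · rintro i (hij | hi)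
              · subst hij; rw [Function.update_self]; exact hx
              · rw [Function.update_of_ne (ne_of_mem_of_not_mem hi hju)]; exact h2 i hi
            · rintro i (hij | hi)
              · subst hij; rw [Function.update_self]; exact hy
              · rw [Function.update_of_ne (ne_of_mem_of_not_mem hi hjv)]; exact h3 i hi
        · rintro (⟨h1, h2, h3⟩ | ⟨h1, h2, h3⟩)
          · refine ⟨?_, fun i hi => ?_, h3⟩
            · rintro i (hij | hi)
              · subst hij
                have hx := h2 i (Or.inl rfl); rw [Function.update_self] at hx
                rw [hc]; exact bool_max_true.mpr (Or.inl hx)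
              · exact h1 i hi
            · have := h2 i (Or.inr hi)
              rwa [Function.update_of_ne (ne_of_mem_of_not_mem hi hju)] at this
          · refine ⟨?_, fun i hi => ?_, fun i hi => ?_⟩
            · rintro i (hij | hi)
              · subst hij
                have hy := h3 i (Or.inl rfl); rw [Function.update_self] at hy
                rw [hc]; exact bool_max_true.mpr (Or.inr hy)
              · exact h1 i hi
            · have := h2 i (Or.inr hi)
              rwa [Function.update_of_ne (ne_of_mem_of_not_mem hi hju)] at this
            · have := h3 i (Or.inr hi)
              rwa [Function.update_of_ne (ne_of_mem_of_not_mem hi hjv)] at this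
      have hdisj : Disjoint
          (mSet t' (insert j u) v c (Function.update a j true) d)
          (mSet t' (insert j u) (insert j v) c (Function.update a j false)
            (Function.update d j true)) := by
        rw [Set.disjoint_left]
        rintro ω ⟨_, h2, _⟩ ⟨_, h2', _⟩
        have hx := h2 j (Finset.mem_insert_self j u); rw [Function.update_self] at hx
        have hx' := h2' j (Finset.mem_insert_self j u); rw [Function.update_self] at hx'
        rw [hx] at hx'; exact Bool.noConfusion hx'
      rw [hset, measure_union hdisj (measurableSet_mSet _ _ _ _ _ _),
        ih _ _ _ _ htu' htv,
        ih _ _ _ _ htu' htv']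
      rw [Finset.prod_insert hj, Finset.prod_insert hju, Finset.prod_insert hju,
        Finset.prod_insert hjv, Function.update_self, Function.update_self,
        Function.update_self,
        prod_bf_update p u a hju true, prod_bf_update p u a hju false,
        prod_bf_update q v d hjv true,
        hc, bf_true_eq hp0 hp1 hq0]
      ring

section Main

variable (e : (ℕ → Bool) → (ℕ → Bool))

def Fmap (x : ℕ × ℕ → Bool) : ℕ × ℕ → Bool :=
  fun ij => max (x ij) (e (fun j => x (ij.1 + 1, j)) ij.2)

def row0 (x : ℕ × ℕ → Bool) : ℕ → Bool := fun j => x (0, j)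

def shift (x : ℕ × ℕ → Bool) : ℕ × ℕ → Bool := fun ij => x (ij.1 + 1, ij.2)

lemma measurable_row0 : Measurable row0 := measurable_reindex (fun j => (0, j))

lemma measurable_shift : Measurable shift :=
  measurable_reindex (fun ij : ℕ × ℕ => (ij.1 + 1, ij.2))

lemma measurable_Fmap (he : Measurable e) : Measurable (Fmap e) :=
  measurable_pi_lambda _ fun ij => measurable_boolMax (measurable_pi_apply ij)
    ((measurable_pi_apply ij.2).comp (he.comp (measurable_reindex (fun j => (ij.1 + 1, j)))))

lemma isBP_row0 {r : ℝ} {μ : Measure (ℕ × ℕ → Bool)} (hμ : IsBernoulliProduct r μ) :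
    IsBernoulliProduct r (μ.map row0) :=
  isBP_map_reindex hμ (fun j => (0, j))
    (fun a b h => by simpa [Prod.ext_iff] using h)

lemma isBP_shift {r : ℝ} {μ : Measure (ℕ × ℕ → Bool)} (hμ : IsBernoulliProduct r μ) :
    IsBernoulliProduct r (μ.map shift) := by
  have h := isBP_map_reindex hμ (fun ij : ℕ × ℕ => (ij.1 + 1, ij.2))
    (fun a b h => by
      simp only [Prod.ext_iff] at h ⊢
      omega)
  exact h

lemma indep_row0_shift {r : ℝ} {μ : Measure (ℕ × ℕ → Bool)}
    (hμ : IsBernoulliProduct r μ) : IndepFun row0 shift μ := by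
  have base := indepFun_mask hμ (fun ij : ℕ × ℕ => decide (ij.1 = 0))
  have hg₁ : Measurable (fun z : ℕ × ℕ → Bool => fun j => z (0, j)) :=
    measurable_reindex (fun j => (0, j))
  have hg₂ : Measurable (fun z : ℕ × ℕ → Bool => fun ij : ℕ × ℕ => z (ij.1 + 1, ij.2)) :=
    measurable_reindex (fun ij : ℕ × ℕ => (ij.1 + 1, ij.2))
  have h := base.comp hg₁ hg₂
  have e1 : row0 = (fun z : ℕ × ℕ → Bool => fun j => z (0, j)) ∘
      (fun x : ℕ × ℕ → Bool => fun i => if decide (i.1 = 0) then x i else false) := by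
    funext x j
    simp [row0, Function.comp]
  have e2 : shift = (fun z : ℕ × ℕ → Bool => fun ij : ℕ × ℕ => z (ij.1 + 1, ij.2)) ∘
      (fun x : ℕ × ℕ → Bool => fun i => if decide (i.1 = 0) then false else x i) := by
    funext x ij
    simp [shift, Function.comp]
  rw [e1, e2]
  exact h

lemma Fmap_zero (x : ℕ × ℕ → Bool) (j : ℕ) :
    max (row0 x j) (e (row0 (shift x)) j) = Fmap e x (0, j) := rfl

lemma Fmap_shift (x : ℕ × ℕ → Bool) (ij : ℕ × ℕ) :
    Fmap e (shift x) ij = Fmap e x (ij.1 + 1, ij.2) := rfl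

lemma mainD {p q : ℝ} (hp0 : 0 ≤ p) (hp1 : p ≤ 1) (hq0 : 0 ≤ q)
    (he : Measurable e)
    (hind : ∀ μp μq : Measure (ℕ → Bool), IsBernoulliProduct p μp → IsBernoulliProduct q μq →
      IndepFun (fun ω => e ω.1) (fun ω i => max (ω.1 i) (ω.2 i)) (μp.prod μq))
    (νq : Measure (ℕ → Bool)) (hνq : IsBernoulliProduct q νq)
    (hνq' : ∀ μp : Measure (ℕ → Bool), IsBernoulliProduct p μp → μp.map e = νq) :
    ∀ m : ℕ, ∀ μ : Measure (ℕ × ℕ → Bool), IsBernoulliProduct p μ →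
      ∀ A : Set (ℕ → Bool), MeasurableSet A →
      ∀ s : Finset (ℕ × ℕ), (∀ ij ∈ s, ij.1 < m) → ∀ b : ℕ × ℕ → Bool,
      μ {x | e (row0 x) ∈ A ∧ ∀ ij ∈ s, Fmap e x ij = b ij} =
        νq A * ∏ ij ∈ s, bf (p + q - p * q) (b ij) := by
  intro m
  induction m with
  | zero =>
    intro μ hμ A hA s hs b
    have hsempty : s = ∅ :=
      Finset.eq_empty_of_forall_notMem (fun ij hij => Nat.not_lt_zero _ (hs ij hij))
    subst hsempty
    have h : {x | e (row0 x) ∈ A ∧ ∀ ij ∈ (∅ : Finset (ℕ × ℕ)), Fmap e x ij = b ij} =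
        (fun x => e (row0 x)) ⁻¹' A := by
      ext x; simp
    rw [h]
    have h2 : μ ((fun x => e (row0 x)) ⁻¹' A) = ((μ.map row0).map e) A := by
      rw [Measure.map_apply he hA, Measure.map_apply measurable_row0 (he hA)]
      rfl
    rw [h2, hνq' _ (isBP_row0 hμ)]
    simp
  | succ m ihm =>
    intro μ hμ A hA s hs b
    classical
    haveI := hμ.1
    set p' := p + q - p * q with hp'
    set t : Finset ℕ := (s.filter fun ij => ij.1 = 0).image Prod.snd with ht
    set sP : Finset (ℕ × ℕ) := s.filter (fun ij => ¬ ij.1 = 0) with hsP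
    set sM : Finset (ℕ × ℕ) := sP.image (fun ij => (ij.1 - 1, ij.2)) with hsM
    have hμ0 : IsBernoulliProduct p (μ.map row0) := isBP_row0 hμ
    have hμ' : IsBernoulliProduct p (μ.map shift) := isBP_shift hμ
    haveI := hμ0.1
    haveI := hμ'.1
    haveI := hνq.1
    -- rows of sM are < m
    have hsMrows : ∀ ij ∈ sM, ij.1 < m := by
      intro ij hij
      obtain ⟨kl, hklmem, rfl⟩ := Finset.mem_image.mp hij
      obtain ⟨hkls, hk0⟩ := Finset.mem_filter.mp hklmem
      have := hs kl hkls
      simp only at hk0 ⊢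
      omega
    -- the pair law
    have hpairlaw : μ.map (fun x => (row0 x, shift x)) =
        (μ.map row0).prod (μ.map shift) :=
      (indepFun_iff_map_prod_eq_prod_map_map measurable_row0.aemeasurable
        measurable_shift.aemeasurable).mp (indep_row0_shift hμ)
    set E : Set ((ℕ → Bool) × (ℕ × ℕ → Bool)) :=
      {ω | e ω.1 ∈ A ∧ (∀ j ∈ t, max (ω.1 j) (e (row0 ω.2) j) = b (0, j)) ∧
        ∀ ij ∈ sM, Fmap e ω.2 ij = b (ij.1 + 1, ij.2)} with hE
    have hEmeas : MeasurableSet E := by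
      have h : E = ((fun ω : (ℕ → Bool) × (ℕ × ℕ → Bool) => e ω.1) ⁻¹' A) ∩
          ((⋂ j ∈ t, {ω : (ℕ → Bool) × (ℕ × ℕ → Bool) |
              max (ω.1 j) (e (row0 ω.2) j) = b (0, j)}) ∩
            (⋂ ij ∈ sM, {ω : (ℕ → Bool) × (ℕ × ℕ → Bool) |
              Fmap e ω.2 ij = b (ij.1 + 1, ij.2)})) := by
        ext ω; simp [hE]
      rw [h]
      refine MeasurableSet.inter ((he.comp measurable_fst) hA)
        (MeasurableSet.inter ?_ ?_)
      · refine MeasurableSet.biInter t.countable_toSet fun j _ => ?_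
        exact measurableSet_eqBool
          (measurable_boolMax ((measurable_pi_apply j).comp measurable_fst)
            ((measurable_pi_apply j).comp (he.comp (measurable_row0.comp measurable_snd)))) _
      · refine MeasurableSet.biInter sM.countable_toSet fun ij _ => ?_
        exact measurableSet_eqBool
          ((measurable_pi_apply ij).comp ((measurable_Fmap e he).comp measurable_snd)) _
    have hsetE : {x | e (row0 x) ∈ A ∧ ∀ ij ∈ s, Fmap e x ij = b ij} =
        (fun x => (row0 x, shift x)) ⁻¹' E := by
      ext x
      simp only [hE, Set.mem_setOf_eq, Set.mem_preimage]
      constructor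
      · rintro ⟨hxA, hx⟩
        refine ⟨hxA, ?_, ?_⟩
        · intro j hj
          obtain ⟨ij, hijmem, hij2⟩ := Finset.mem_image.mp hj
          obtain ⟨hijs, hij0⟩ := Finset.mem_filter.mp hijmem
          obtain ⟨k, l⟩ := ij
          simp only at hij0 hij2
          subst hij0; subst hij2
          rw [Fmap_zero]
          exact hx (0, l) hijs
        · intro ij hij
          obtain ⟨kl, hklmem, rfl⟩ := Finset.mem_image.mp hij
          obtain ⟨hkls, hk0⟩ := Finset.mem_filter.mp hklmem
          obtain ⟨k, l⟩ := kl
          simp only at hk0 ⊢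
          rw [Fmap_shift]
          have hk : k - 1 + 1 = k := by omega
          rw [hk]
          exact hx (k, l) hkls
      · rintro ⟨hxA, h1, h2⟩
        refine ⟨hxA, ?_⟩
        intro ij hijs
        obtain ⟨k, l⟩ := ij
        by_cases hk : k = 0
        · subst hk
          have hl : l ∈ t := Finset.mem_image.mpr
            ⟨(0, l), Finset.mem_filter.mpr ⟨hijs, rfl⟩, rfl⟩
          have := h1 l hl
          rwa [Fmap_zero] at this
        · have hmem : (k - 1, l) ∈ sM := Finset.mem_image.mpr
            ⟨(k, l), Finset.mem_filter.mpr ⟨hijs, hk⟩, rfl⟩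
          have := h2 (k - 1, l) hmem
          rw [Fmap_shift] at this
          simp only at this
          have hkk : k - 1 + 1 = k := by omega
          rwa [hkk] at this
    rw [hsetE, ← Measure.map_apply (measurable_row0.prodMk measurable_shift) hEmeas,
      hpairlaw, Measure.prod_apply hEmeas]
    set N : Set ((ℕ → Bool) × (ℕ → Bool)) :=
      {ω | e ω.1 ∈ A ∧ ∀ j ∈ t, max (ω.1 j) (ω.2 j) = b (0, j)} with hN
    have hNmeas : MeasurableSet N := by
      have h : N = ((fun ω : (ℕ → Bool) × (ℕ → Bool) => e ω.1) ⁻¹' A) ∩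
          (⋂ j ∈ t, {ω : (ℕ → Bool) × (ℕ → Bool) | max (ω.1 j) (ω.2 j) = b (0, j)}) := by
        ext ω; simp [hN]
      rw [h]
      refine MeasurableSet.inter ((he.comp measurable_fst) hA) ?_
      refine MeasurableSet.biInter t.countable_toSet fun j _ => ?_
      exact measurableSet_eqBool
        (measurable_boolMax ((measurable_pi_apply j).comp measurable_fst)
          ((measurable_pi_apply j).comp measurable_snd)) _
    set K : ENNReal := ∏ ij ∈ sM, bf p' (b (ij.1 + 1, ij.2)) with hK
    have hpointwise : ∀ x₀ : ℕ → Bool,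
        (μ.map shift) (Prod.mk x₀ ⁻¹' E) = νq (Prod.mk x₀ ⁻¹' N) * K := by
      intro x₀
      by_cases hx₀ : e x₀ ∈ A
      · have hsliceE : Prod.mk x₀ ⁻¹' E =
            {y | e (row0 y) ∈ {z : ℕ → Bool | ∀ j ∈ t, max (x₀ j) (z j) = b (0, j)} ∧
              ∀ ij ∈ sM, Fmap e y ij = b (ij.1 + 1, ij.2)} := by
          ext y
          simp only [hE, Set.mem_preimage, Set.mem_setOf_eq]
          tauto
        have hsliceN : Prod.mk x₀ ⁻¹' N =
            {z : ℕ → Bool | ∀ j ∈ t, max (x₀ j) (z j) = b (0, j)} := by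
          ext z
          simp only [hN, Set.mem_preimage, Set.mem_setOf_eq]
          tauto
        have hAxmeas : MeasurableSet {z : ℕ → Bool | ∀ j ∈ t, max (x₀ j) (z j) = b (0, j)} := by
          have h : {z : ℕ → Bool | ∀ j ∈ t, max (x₀ j) (z j) = b (0, j)} =
              ⋂ j ∈ t, {z : ℕ → Bool | max (x₀ j) (z j) = b (0, j)} := by
            ext z; simp
          rw [h]
          refine MeasurableSet.biInter t.countable_toSet fun j _ => ?_
          exact measurableSet_eqBool (measurable_boolMax measurable_const
            (measurable_pi_apply j)) _
        rw [hsliceE, hsliceN]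
        exact ihm (μ.map shift) hμ' _ hAxmeas sM hsMrows (fun ij => b (ij.1 + 1, ij.2))
      · have hsliceE : Prod.mk x₀ ⁻¹' E = ∅ := by
          ext y
          simp only [hE, Set.mem_preimage, Set.mem_setOf_eq, Set.mem_empty_iff_false,
            iff_false]
          tauto
        have hsliceN : Prod.mk x₀ ⁻¹' N = ∅ := by
          ext z
          simp only [hN, Set.mem_preimage, Set.mem_setOf_eq, Set.mem_empty_iff_false,
            iff_false]
          tauto
        rw [hsliceE, hsliceN]
        simp
    rw [lintegral_congr hpointwise]
    rw [lintegral_mul_const _ (measurable_measure_prodMk_left hNmeas)]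
    rw [← Measure.prod_apply hNmeas]
    -- now compute ((μ.map row0).prod νq) N
    have hNval : ((μ.map row0).prod νq) N = νq A * ∏ j ∈ t, bf p' (b (0, j)) := by
      have hNsplit : N = ((fun ω : (ℕ → Bool) × (ℕ → Bool) => e ω.1) ⁻¹' A) ∩
          ((fun ω : (ℕ → Bool) × (ℕ → Bool) => fun i => max (ω.1 i) (ω.2 i)) ⁻¹'
            cyl t (fun j => b (0, j))) := by
        ext ω
        simp only [hN, Set.mem_setOf_eq, Set.mem_inter_iff, Set.mem_preimage, cyl]
      rw [hNsplit,
        (hind (μ.map row0) νq hμ0 hνq).measure_inter_preimage_eq_mul _ _ hA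
          (measurableSet_cyl t (fun j => b (0, j)))]
      congr 1
      · have h1 : (fun ω : (ℕ → Bool) × (ℕ → Bool) => e ω.1) ⁻¹' A =
            Prod.fst ⁻¹' (e ⁻¹' A) := rfl
        rw [h1, ← Measure.map_apply measurable_fst (he hA), Measure.map_fst_prod,
          measure_univ, one_smul, ← Measure.map_apply he hA, hνq' _ hμ0]
      · have h2 : (fun ω : (ℕ → Bool) × (ℕ → Bool) => fun i => max (ω.1 i) (ω.2 i)) ⁻¹'
            cyl t (fun j => b (0, j)) =
            mSet t ∅ ∅ (fun j => b (0, j)) (fun _ => false) (fun _ => false) := by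
          ext ω
          simp [mSet, cyl]
        rw [h2, maxCyl hp0 hp1 hq0 hμ0 hνq t (fun j => b (0, j)) ∅ ∅ _ _
          (by simp) (by simp)]
        simp
        rfl
    rw [hNval]
    -- product bookkeeping
    have hprodt : ∏ j ∈ t, bf p' (b (0, j)) =
        ∏ ij ∈ s.filter (fun ij => ij.1 = 0), bf p' (b ij) := by
      rw [ht, Finset.prod_image]
      · refine Finset.prod_congr rfl fun ij hij => ?_
        obtain ⟨k, l⟩ := ij
        have hk : k = 0 := (Finset.mem_filter.mp hij).2
        subst hk
        rfl
      · intro ij hij ij' hij' h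
        have h1 : ij.1 = 0 := (Finset.mem_filter.mp hij).2
        have h2 : ij'.1 = 0 := (Finset.mem_filter.mp hij').2
        exact Prod.ext_iff.mpr ⟨h1.trans h2.symm, h⟩
    have hprodK : K = ∏ ij ∈ sP, bf p' (b ij) := by
      rw [hK, hsM, Finset.prod_image]
      · refine Finset.prod_congr rfl fun ij hij => ?_
        have h0 : ¬ ij.1 = 0 := (Finset.mem_filter.mp hij).2
        have h1 : ij.1 - 1 + 1 = ij.1 := by omega
        simp only [h1]
      · intro ij hij ij' hij' h
        have h1 : ¬ ij.1 = 0 := (Finset.mem_filter.mp hij).2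
        have h2 : ¬ ij'.1 = 0 := (Finset.mem_filter.mp hij').2
        simp only [Prod.ext_iff] at h ⊢
        omega
    rw [hprodt, hprodK, mul_assoc,
      Finset.prod_filter_mul_prod_filter_not s (fun ij => ij.1 = 0) (fun ij => bf p' (b ij))]

end Main

end BPAux

/-- Given a perfect extractor `e` (producing `Bernoulli(q)^ℕ` output independent of
`max(X,Y)`), the map `F(x)(i,j) = max(x(i,j), e(x(i+1,·))(j))` is a discrete thickening
from density `p` to density `p' = p + q - pq` on `{0,1}^{ℕ×ℕ}`. -/
theorem thickening_from_extractor (p q : ℝ) (hp : 0 < p) (hp1 : p < 1) (hq : 0 < q) (hq1 : q < 1)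
    (e : (ℕ → Bool) → (ℕ → Bool)) (he : Measurable e)
    (hlaw : ∀ μp : Measure (ℕ → Bool), IsBernoulliProduct p μp →
      IsBernoulliProduct q (μp.map e))
    (hind : ∀ μp μq : Measure (ℕ → Bool), IsBernoulliProduct p μp → IsBernoulliProduct q μq →
      IndepFun (fun ω => e ω.1) (fun ω i => max (ω.1 i) (ω.2 i)) (μp.prod μq)) :
    (∀ (x : ℕ × ℕ → Bool) (ij : ℕ × ℕ),
      x ij ≤ max (x ij) (e (fun j => x (ij.1 + 1, j)) ij.2)) ∧
    ∀ μ : Measure (ℕ × ℕ → Bool), IsBernoulliProduct p μ →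
      IsBernoulliProduct (p + q - p * q)
        (μ.map (fun x (ij : ℕ × ℕ) => max (x ij) (e (fun j => x (ij.1 + 1, j)) ij.2))) := by
  refine ⟨fun x ij => le_max_left _ _, ?_⟩
  intro μ hμ
  classical
  haveI := hμ.1
  have hF : Measurable (BPAux.Fmap e) := BPAux.measurable_Fmap e he
  set νq := (μ.map BPAux.row0).map e with hνqdef
  have hνq : IsBernoulliProduct q νq := hlaw _ (BPAux.isBP_row0 hμ)
  have hνq' : ∀ μp : Measure (ℕ → Bool), IsBernoulliProduct p μp → μp.map e = νq :=
    fun μp hμp => BPAux.isBP_unique (hlaw _ hμp) hνq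
  constructor
  · exact Measure.isProbabilityMeasure_map hF.aemeasurable
  · intro s b
    show (μ.map (BPAux.Fmap e)) (BPAux.cyl s b) = _
    rw [Measure.map_apply hF (BPAux.measurableSet_cyl s b)]
    have hset : (BPAux.Fmap e) ⁻¹' BPAux.cyl s b =
        {x | e (BPAux.row0 x) ∈ Set.univ ∧ ∀ ij ∈ s, BPAux.Fmap e x ij = b ij} := by
      ext x; simp [BPAux.cyl]
    rw [hset, BPAux.mainD e hp.le hp1.le hq.le he hind νq hνq hνq'
      ((s.sup Prod.fst) + 1) μ hμ Set.univ MeasurableSet.univ s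
      (fun ij hij => Nat.lt_succ_of_le (Finset.le_sup (f := Prod.fst) hij)) b]
    haveI := hνq.1
    rw [measure_univ, one_mul]
    rfl
end

section
/- Let 0 < p < 1, 0 < q < 1, ε > 0, and let f : {0,1}^ℕ → {0,1} be an ε-extractor. Then there exists a corrector for f: a measurable function f' : {0,1}^ℕ × {0,1}^ℕ × {0,1}^ℕ → {0,1} such that, when X ~ Bernoulli(p)^ℕ, Y ~ Bernoulli(q)^ℕ and Z ~ Bernoulli(1/2)^ℕ are independent: (i) f(X) ⊕ f'(X,Y,Z) ~ Bernoulli(1/2); (ii) f(X) ⊕ f'(X,Y,Z) is independent of max(X,Y); (iii) P( f'(X,Y,Z) = 1 ) < ε. -/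
open MeasureTheory ProbabilityTheory

namespace CorrectorAux

open Filter Topology

/-- `i`-th binary digit of `t`. -/
noncomputable def dig (t : ℝ) (i : ℕ) : Bool := decide (⌊t * 2 ^ (i+1)⌋₊ % 2 = 1)

/-- `z` is lexicographically below the digit sequence `d`. -/
def lexLt (z d : ℕ → Bool) : Prop := ∃ i, d i = true ∧ z i = false ∧ ∀ j < i, z j = d j

lemma dig_step (t : ℝ) (ht : 0 ≤ t) (n : ℕ) :
    ⌊t * 2 ^ (n+1)⌋₊ = 2 * ⌊t * 2 ^ n⌋₊ + (if dig t n then 1 else 0) := by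
  have hs : (0:ℝ) ≤ t * 2 ^ n := by positivity
  have key : t * 2 ^ (n+1) = 2 * (t * 2 ^ n) := by ring
  have h1 : 2 * ⌊t * 2 ^ n⌋₊ ≤ ⌊t * 2 ^ (n+1)⌋₊ := by
    rw [Nat.le_floor_iff (by positivity), key]
    push_cast
    nlinarith [Nat.floor_le hs]
  have h2 : ⌊t * 2 ^ (n+1)⌋₊ < 2 * ⌊t * 2 ^ n⌋₊ + 2 := by
    rw [Nat.floor_lt (by positivity), key]
    push_cast
    nlinarith [Nat.lt_floor_add_one (t * 2 ^ n)]
  have hcases : ⌊t * 2 ^ (n+1)⌋₊ = 2 * ⌊t * 2 ^ n⌋₊ ∨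
      ⌊t * 2 ^ (n+1)⌋₊ = 2 * ⌊t * 2 ^ n⌋₊ + 1 := by omega
  unfold dig
  rcases hcases with h | h <;> rw [h]
  · have h0 : (2 * ⌊t * 2 ^ n⌋₊) % 2 = 0 := by omega
    simp [h0]
  · have h1 : (2 * ⌊t * 2 ^ n⌋₊ + 1) % 2 = 1 := by omega
    simp [h1]

lemma partial_sum_dig (t : ℝ) (ht : 0 ≤ t) (ht1 : t < 1) (n : ℕ) :
    ∑ i ∈ Finset.range n, (if dig t i then ((1:ℝ)/2) ^ (i+1) else 0)
      = (⌊t * 2 ^ n⌋₊ : ℝ) / 2 ^ n := by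
  induction n with
  | zero => simp [Nat.floor_eq_zero.mpr ht1]
  | succ n ih =>
    rw [Finset.sum_range_succ, ih, dig_step t ht n]
    rcases h : dig t n <;> simp only [Bool.false_eq_true, ↓reduceIte, one_div, inv_pow] <;> push_cast <;> field_simp <;> ring

lemma summable_dig (t : ℝ) :
    Summable (fun i => if dig t i then ((1:ℝ)/2) ^ (i+1) else 0) := by
  apply Summable.of_nonneg_of_le (fun i => by positivity)
    (fun i => ?_) (((summable_geometric_of_lt_one (by norm_num) (by norm_num)
      (r := (1:ℝ)/2))).mul_left ((1:ℝ)/2))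
  rcases h : dig t i <;> simp [h]
  rw [pow_succ]
  exact le_of_eq (by ring)

lemma tsum_dig (t : ℝ) (ht : 0 ≤ t) (ht1 : t < 1) :
    ∑' i, (if dig t i then ((1:ℝ)/2) ^ (i+1) else 0) = t := by
  refine HasSum.tsum_eq ?_
  rw [(summable_dig t).hasSum_iff_tendsto_nat]
  have heq : (fun n => ∑ i ∈ Finset.range n, (if dig t i then ((1:ℝ)/2) ^ (i+1) else 0))
      = fun n => (⌊t * 2 ^ n⌋₊ : ℝ) / 2 ^ n := funext (partial_sum_dig t ht ht1)
  rw [heq]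
  have hlow : ∀ n : ℕ, t - ((1:ℝ)/2) ^ n ≤ (⌊t * 2 ^ n⌋₊ : ℝ) / 2 ^ n := by
    intro n
    rw [le_div_iff₀ (by positivity)]
    have := Nat.sub_one_lt_floor (t * 2 ^ n)
    have h2 : ((1:ℝ)/2) ^ n * 2 ^ n = 1 := by
      rw [← mul_pow]; norm_num
    nlinarith
  have hhigh : ∀ n : ℕ, (⌊t * 2 ^ n⌋₊ : ℝ) / 2 ^ n ≤ t := by
    intro n
    rw [div_le_iff₀ (by positivity)]
    exact Nat.floor_le (by positivity)
  refine tendsto_of_tendsto_of_tendsto_of_le_of_le ?_ tendsto_const_nhds hlow hhigh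
  have : Tendsto (fun n : ℕ => ((1:ℝ)/2) ^ n) atTop (nhds 0) :=
    tendsto_pow_atTop_nhds_zero_of_lt_one (by norm_num) (by norm_num)
  simpa using tendsto_const_nhds.sub this

variable {μz : Measure (ℕ → Bool)}

lemma cylinder_measure (h : IsBernoulliProduct (1/2) μz) (n : ℕ) (b : ℕ → Bool) :
    μz {x | ∀ j ∈ Finset.range n, x j = b j} = ENNReal.ofReal (1/2) ^ n := by
  rw [h.2]
  have hc : ∀ i ∈ Finset.range n,
      (if b i then ENNReal.ofReal (1/2) else ENNReal.ofReal (1 - 1/2))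
        = ENNReal.ofReal (1/2) := by
    intro i _; norm_num
  rw [Finset.prod_congr rfl hc, Finset.prod_const, Finset.card_range]

/-- The `i`-th cylinder piece of the lexicographic event. -/
def lexPiece (d : ℕ → Bool) (i : ℕ) : Set (ℕ → Bool) :=
  {z | d i = true ∧ z i = false ∧ ∀ j < i, z j = d j}

lemma measurableSet_lexPiece (d : ℕ → Bool) (i : ℕ) : MeasurableSet (lexPiece d i) := by
  have : lexPiece d i = {z : ℕ → Bool | d i = true} ∩
      (((fun z : ℕ → Bool => z i) ⁻¹' {false}) ∩
        ⋂ j, ⋂ (_ : j < i), (fun z : ℕ → Bool => z j) ⁻¹' {d j}) := by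
    ext z; simp [lexPiece, Set.mem_iInter]
  rw [this]
  refine (MeasurableSet.const _).inter (((measurable_pi_apply i)
    (measurableSet_singleton false)).inter ?_)
  exact MeasurableSet.iInter fun j => MeasurableSet.iInter fun _ =>
    (measurable_pi_apply j) (measurableSet_singleton (d j))

lemma lexPiece_disjoint (d : ℕ → Bool) : Pairwise (Function.onFun Disjoint (lexPiece d)) := by
  have key : ∀ i j : ℕ, i < j → Disjoint (lexPiece d i) (lexPiece d j) := by
    intro i j hij
    rw [Set.disjoint_left]
    rintro z ⟨hdi, hzi, -⟩ ⟨-, -, hall⟩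
    rw [hall i hij] at hzi
    rw [hdi] at hzi
    exact Bool.noConfusion hzi
  intro i j hij
  rcases lt_or_gt_of_ne hij with h | h
  · exact key i j h
  · exact (key j i h).symm

lemma lexLt_eq_iUnion (d : ℕ → Bool) : {z : ℕ → Bool | lexLt z d} = ⋃ i, lexPiece d i := by
  ext z; simp [lexLt, lexPiece, Set.mem_iUnion]

lemma measurableSet_lexLt (d : ℕ → Bool) : MeasurableSet {z : ℕ → Bool | lexLt z d} := by
  rw [lexLt_eq_iUnion]
  exact MeasurableSet.iUnion (measurableSet_lexPiece d)

lemma lexPiece_measure (h : IsBernoulliProduct (1/2) μz) (d : ℕ → Bool) (i : ℕ) :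
    μz (lexPiece d i) = if d i then ENNReal.ofReal (1/2) ^ (i+1) else 0 := by
  by_cases hd : d i = true
  · have hset : lexPiece d i =
        {z : ℕ → Bool | ∀ j ∈ Finset.range (i+1),
          z j = (fun j => if j < i then d j else false) j} := by
      ext z
      simp only [lexPiece, Set.mem_setOf_eq, Finset.mem_range, Nat.lt_succ_iff, hd,
        true_and]
      constructor
      · rintro ⟨h0, h1⟩ j hj
        rcases lt_or_eq_of_le hj with hlt | rfl
        · simp [hlt, h1 j hlt]
        · simp [lt_irrefl, h0]
      · intro hall
        constructor
        · have := hall i le_rfl; simpa [lt_irrefl] using this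
        · intro j hj; have := hall j hj.le; simpa [hj] using this
    rw [hset, cylinder_measure h, hd]
    simp
  · have : lexPiece d i = ∅ := by
      ext z; simp [lexPiece, hd]
    rw [this]
    simp [hd]

lemma lexLt_measure (h : IsBernoulliProduct (1/2) μz) (t : ℝ) (ht : 0 ≤ t) (ht1 : t < 1) :
    μz {z | lexLt z (dig t)} = ENNReal.ofReal t := by
  rw [lexLt_eq_iUnion, measure_iUnion (lexPiece_disjoint _) (measurableSet_lexPiece _)]
  have step1 : ∀ i, μz (lexPiece (dig t) i)
      = ENNReal.ofReal (if dig t i then ((1:ℝ)/2) ^ (i+1) else 0) := by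
    intro i
    rw [lexPiece_measure h]
    rcases hdi : dig t i <;>
      simp only [hdi, Bool.false_eq_true, if_false, if_true, ENNReal.ofReal_zero,
        ENNReal.ofReal_pow (by norm_num : (0:ℝ) ≤ 1/2)]
  rw [tsum_congr step1, ← ENNReal.ofReal_tsum_of_nonneg
    (fun i => by rcases hdi : dig t i <;> simp [hdi] <;> positivity) (summable_dig t),
    tsum_dig t ht ht1]

lemma lexLt_compl_measure (h : IsBernoulliProduct (1/2) μz) (t : ℝ) (ht : 0 ≤ t) (ht1 : t < 1) :
    μz {z | ¬ lexLt z (dig t)} = ENNReal.ofReal (1 - t) := by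
  haveI := h.1
  have hc : {z : ℕ → Bool | ¬ lexLt z (dig t)} = {z | lexLt z (dig t)}ᶜ := rfl
  rw [hc, measure_compl (measurableSet_lexLt _) (measure_ne_top _ _),
    lexLt_measure h t ht ht1, measure_univ, ENNReal.ofReal_sub 1 ht, ENNReal.ofReal_one]

lemma measurable_dig_comp {α : Type*} [MeasurableSpace α] {T : α → ℝ} (hT : Measurable T)
    (i : ℕ) : Measurable fun a => dig (T a) i := by
  unfold dig
  exact (Measurable.of_discrete (f := fun k : ℕ => decide (k % 2 = 1))).comp
    (hT.mul_const _).nat_floor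

lemma measurableSet_lexLt_pair {α : Type*} [MeasurableSpace α] {T : α → ℝ}
    (hT : Measurable T) :
    MeasurableSet {p : α × (ℕ → Bool) | lexLt p.2 (dig (T p.1))} := by
  have hrep : {p : α × (ℕ → Bool) | lexLt p.2 (dig (T p.1))}
      = ⋃ i, (((fun p : α × (ℕ → Bool) => dig (T p.1) i) ⁻¹' {true})
          ∩ (((fun p : α × (ℕ → Bool) => p.2 i) ⁻¹' {false})
          ∩ ⋂ j, ⋂ (_ : j < i), {p : α × (ℕ → Bool) | p.2 j = dig (T p.1) j})) := by
    ext p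
    simp [lexLt, Set.mem_iUnion]
  rw [hrep]
  refine MeasurableSet.iUnion fun i => ((measurable_dig_comp (hT.comp measurable_fst) i)
    (measurableSet_singleton true)).inter
    ((((measurable_pi_apply i).comp measurable_snd) (measurableSet_singleton false)).inter
      (MeasurableSet.iInter fun j => MeasurableSet.iInter fun _ => ?_))
  exact measurableSet_eq_fun
    (measurable_snd.eval)
    (measurable_dig_comp (hT.comp measurable_fst) j)

/-! ### Pointwise algebra of flip thresholds -/

noncomputable def clamp (a : ℝ) : ℝ := min 1 (max 0 a)
noncomputable def tau1 (a : ℝ) : ℝ := max 0 ((a - 1/2) / a)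
noncomputable def tau0 (a : ℝ) : ℝ := max 0 ((1/2 - a) / (1 - a))

lemma clamp_nonneg (a : ℝ) : 0 ≤ clamp a := le_min (by norm_num) (le_max_left _ _)
lemma clamp_le_one (a : ℝ) : clamp a ≤ 1 := min_le_left _ _
lemma clamp_eq (a : ℝ) (h0 : 0 ≤ a) (h1 : a ≤ 1) : clamp a = a := by
  unfold clamp; rw [max_eq_right h0, min_eq_right h1]

lemma tau1_nonneg (a : ℝ) : 0 ≤ tau1 a := le_max_left _ _
lemma tau0_nonneg (a : ℝ) : 0 ≤ tau0 a := le_max_left _ _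

lemma tau1_lt_one (a : ℝ) (h0 : 0 ≤ a) : tau1 a < 1 := by
  unfold tau1
  rcases eq_or_lt_of_le h0 with h | h
  · simp [← h]
  · rw [max_lt_iff]
    exact ⟨by norm_num, by rw [div_lt_one h]; linarith⟩

lemma tau0_lt_one (a : ℝ) (h1 : a ≤ 1) : tau0 a < 1 := by
  unfold tau0
  rcases eq_or_lt_of_le h1 with h | h
  · simp [h]
  · rw [max_lt_iff]
    refine ⟨by norm_num, ?_⟩
    rw [div_lt_one (by linarith)]; linarith

lemma tau_id1 (a : ℝ) (h0 : 0 ≤ a) (h1 : a ≤ 1) :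
    a * (1 - tau1 a - tau0 a) + tau0 a = 1/2 := by
  rcases le_or_gt (1/2) a with h | h
  · have ha : (0:ℝ) < a := by linarith
    have ht1 : tau1 a = (a - 1/2) / a := max_eq_right (div_nonneg (by linarith) ha.le)
    have ht0 : tau0 a = 0 := max_eq_left (div_nonpos_iff.mpr (Or.inr ⟨by linarith, by linarith⟩))
    rw [ht1, ht0]
    field_simp
    ring
  · have ha : (0:ℝ) < 1 - a := by linarith
    have ht1 : tau1 a = 0 := max_eq_left (div_nonpos_iff.mpr (Or.inr ⟨by linarith, h0⟩))
    have ht0 : tau0 a = (1/2 - a) / (1 - a) :=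
      max_eq_right (div_nonneg (by linarith) ha.le)
    rw [ht1, ht0]
    field_simp
    ring

lemma tau_id2 (a : ℝ) (h0 : 0 ≤ a) (h1 : a ≤ 1) :
    a * tau1 a + (1 - a) * tau0 a = |a - 1/2| := by
  rcases le_or_gt (1/2) a with h | h
  · have ha : (0:ℝ) < a := by linarith
    have ht1 : tau1 a = (a - 1/2) / a := max_eq_right (div_nonneg (by linarith) ha.le)
    have ht0 : tau0 a = 0 := max_eq_left (div_nonpos_iff.mpr (Or.inr ⟨by linarith, by linarith⟩))
    rw [ht1, ht0, abs_of_nonneg (by linarith)]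
    field_simp
    ring
  · have ha : (0:ℝ) < 1 - a := by linarith
    have ht1 : tau1 a = 0 := max_eq_left (div_nonpos_iff.mpr (Or.inr ⟨by linarith, h0⟩))
    have ht0 : tau0 a = (1/2 - a) / (1 - a) :=
      max_eq_right (div_nonneg (by linarith) ha.le)
    rw [ht1, ht0, abs_of_neg (by linarith)]
    field_simp
    ring

lemma measurable_clamp : Measurable clamp :=
  measurable_const.min (measurable_const.max measurable_id)
lemma measurable_tau1 : Measurable tau1 :=
  measurable_const.max ((measurable_id.sub_const _).div measurable_id)
lemma measurable_tau0 : Measurable tau0 :=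
  measurable_const.max ((measurable_const.sub measurable_id).div
    (measurable_const.sub measurable_id))

/-- The sigma-algebra generated by the coordinatewise max. -/
def mSigma : MeasurableSpace ((ℕ → Bool) × (ℕ → Bool)) :=
  MeasurableSpace.comap
    (fun ω : (ℕ → Bool) × (ℕ → Bool) => fun i => max (ω.1 i) (ω.2 i)) inferInstance

lemma ofReal_half : ENNReal.ofReal (1/2 : ℝ) = 2⁻¹ := by
  rw [show (1/2:ℝ) = (2:ℝ)⁻¹ by norm_num, ENNReal.ofReal_inv_of_pos (by norm_num)]
  norm_num

set_option maxHeartbeats 1000000 in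
theorem main (p q : ℝ) (hp : 0 < p) (hp1 : p < 1) (hq : 0 < q) (hq1 : q < 1)
    (ε : ℝ) (hε : 0 < ε)
    (μp μq μz : Measure (ℕ → Bool))
    (hμp : IsBernoulliProduct p μp) (hμq : IsBernoulliProduct q μq)
    (hμz : IsBernoulliProduct (1/2) μz)
    (f : (ℕ → Bool) → Bool) (hf : Measurable f)
    -- `f` is an `ε`-extractor:
    (hf_law : (μp.prod μq).map (fun ω => f ω.1) = _root_.bernoulliMeasure (1/2))
    (hf_ext : ∫ ω, |((μp.prod μq)[(fun ω : (ℕ → Bool) × (ℕ → Bool) =>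
        if f ω.1 then (1:ℝ) else 0) |
        MeasurableSpace.comap
          (fun ω : (ℕ → Bool) × (ℕ → Bool) => fun i => max (ω.1 i) (ω.2 i))
          inferInstance]) ω - 1/2| ∂(μp.prod μq) < ε) :
    ∃ f' : (ℕ → Bool) × (ℕ → Bool) × (ℕ → Bool) → Bool, Measurable f' ∧
      (μp.prod (μq.prod μz)).map (fun ω => xor (f ω.1) (f' ω)) = _root_.bernoulliMeasure (1/2) ∧
      IndepFun (fun ω => xor (f ω.1) (f' ω))
        (fun ω i => max (ω.1 i) (ω.2.1 i)) (μp.prod (μq.prod μz)) ∧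
      (μp.prod (μq.prod μz)) {ω | f' ω = true} < ENNReal.ofReal ε := by
  classical
  haveI := hμp.1
  haveI := hμq.1
  haveI := hμz.1
  -- Notation
  set ν : Measure ((ℕ → Bool) × (ℕ → Bool)) := μp.prod μq with hν_def
  set μ3 : Measure ((ℕ → Bool) × (ℕ → Bool) × (ℕ → Bool)) := μp.prod (μq.prod μz) with hμ3_def
  set M : (ℕ → Bool) × (ℕ → Bool) → (ℕ → Bool) :=
    fun ω : (ℕ → Bool) × (ℕ → Bool) => fun i => max (ω.1 i) (ω.2 i) with hM_def
  set M' : (ℕ → Bool) × (ℕ → Bool) × (ℕ → Bool) → (ℕ → Bool) :=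
    fun ω => fun i => max (ω.1 i) (ω.2.1 i) with hM'_def
  have hM : Measurable M := by
    refine measurable_pi_lambda _ fun i => ?_
    have h1 : Measurable fun ω : (ℕ → Bool) × (ℕ → Bool) => (ω.1 i, ω.2 i) :=
      ((measurable_pi_apply i).comp measurable_fst).prodMk
        ((measurable_pi_apply i).comp measurable_snd)
    exact (Measurable.of_discrete (f := fun bp : Bool × Bool => max bp.1 bp.2)).comp h1
  have hM' : Measurable M' := by
    refine measurable_pi_lambda _ fun i => ?_
    have h1 : Measurable fun ω : (ℕ → Bool) × (ℕ → Bool) × (ℕ → Bool) => (ω.1 i, ω.2.1 i) :=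
      ((measurable_pi_apply i).comp measurable_fst).prodMk
        ((measurable_pi_apply i).comp (measurable_fst.comp measurable_snd))
    exact (Measurable.of_discrete (f := fun bp : Bool × Bool => max bp.1 bp.2)).comp h1
  have hm : mSigma ≤ Prod.instMeasurableSpace := hM.comap_le
  haveI : SigmaFinite (ν.trim hm) := by
    haveI : IsFiniteMeasure (ν.trim hm) := MeasureTheory.isFiniteMeasure_trim hm
    infer_instance
  set F : (ℕ → Bool) × (ℕ → Bool) → ℝ :=
    fun ω : (ℕ → Bool) × (ℕ → Bool) => if f ω.1 then (1:ℝ) else 0 with hF_def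
  have hfset : MeasurableSet {ω : (ℕ → Bool) × (ℕ → Bool) | f ω.1 = true} :=
    (hf.comp measurable_fst) (measurableSet_singleton true)
  have hF_meas : Measurable F := Measurable.ite hfset measurable_const measurable_const
  -- helper: bounded measurable functions are integrable
  have hbint : ∀ (h : (ℕ → Bool) × (ℕ → Bool) → ℝ) (C : ℝ), Measurable h →
      (∀ ω, |h ω| ≤ C) → Integrable h ν := by
    intro h C hhm hb
    exact (integrable_const C).mono' hhm.aestronglyMeasurable
      (Filter.Eventually.of_forall fun ω => by simpa using hb ω)
  have hF_int : Integrable F ν := by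
    refine hbint F 1 hF_meas fun ω => ?_
    by_cases h : f ω.1 <;> simp [hF_def, h]
  set g : (ℕ → Bool) × (ℕ → Bool) → ℝ := ν[F|mSigma] with hg_def
  have hg_sm : StronglyMeasurable[mSigma] g := stronglyMeasurable_condExp
  have hg_m : Measurable[mSigma] g := hg_sm.measurable
  have hg_meas : Measurable g := (hg_sm.mono hm).measurable
  have hg01 : ∀ᵐ ω ∂ν, 0 ≤ g ω ∧ g ω ≤ 1 := by
    have h0 : 0 ≤ᵐ[ν] g := condExp_nonneg (Filter.Eventually.of_forall fun ω => by
      by_cases h : f ω.1 <;> simp [hF_def, h])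
    have h1 : g ≤ᵐ[ν] ν[(fun _ => (1:ℝ))|mSigma] :=
      condExp_mono hF_int (integrable_const 1) (Filter.Eventually.of_forall fun ω => by
        by_cases h : f ω.1 <;> simp [hF_def, h])
    rw [condExp_const hm] at h1
    filter_upwards [h0, h1] with ω hω0 hω1
    exact ⟨hω0, hω1⟩
  set c : (ℕ → Bool) × (ℕ → Bool) → ℝ := fun ω => clamp (g ω) with hc_def
  set t1f : (ℕ → Bool) × (ℕ → Bool) → ℝ := fun ω => tau1 (c ω) with ht1f_def
  set t0f : (ℕ → Bool) × (ℕ → Bool) → ℝ := fun ω => tau0 (c ω) with ht0f_def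
  have hc_m : Measurable[mSigma] c := measurable_clamp.comp hg_m
  have hc_meas : Measurable c := measurable_clamp.comp hg_meas
  have ht1_m : Measurable[mSigma] t1f := measurable_tau1.comp hc_m
  have ht0_m : Measurable[mSigma] t0f := measurable_tau0.comp hc_m
  have ht1_meas : Measurable t1f := measurable_tau1.comp hc_meas
  have ht0_meas : Measurable t0f := measurable_tau0.comp hc_meas
  have ht1_bd : ∀ ω, 0 ≤ t1f ω ∧ t1f ω < 1 :=
    fun ω => ⟨tau1_nonneg _, tau1_lt_one _ (clamp_nonneg _)⟩
  have ht0_bd : ∀ ω, 0 ≤ t0f ω ∧ t0f ω < 1 :=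
    fun ω => ⟨tau0_nonneg _, tau0_lt_one _ (clamp_le_one _)⟩
  set T : (ℕ → Bool) × (ℕ → Bool) → ℝ := fun ω => if f ω.1 then t1f ω else t0f ω with hT_def
  have hT : Measurable T := Measurable.ite hfset ht1_meas ht0_meas
  have hT_bd : ∀ ω, 0 ≤ T ω ∧ T ω < 1 := by
    intro ω
    by_cases h : f ω.1 <;> simp only [hT_def, h, if_true, if_false]
    · exact ht1_bd ω
    · exact ht0_bd ω
  -- the corrector
  set Sset : Set (((ℕ → Bool) × (ℕ → Bool)) × (ℕ → Bool)) :=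
    {p | lexLt p.2 (dig (T p.1))} with hSset_def
  have hSset : MeasurableSet Sset := measurableSet_lexLt_pair hT
  set f' : (ℕ → Bool) × (ℕ → Bool) × (ℕ → Bool) → Bool :=
    fun ω => decide (lexLt ω.2.2 (dig (T (ω.1, ω.2.1)))) with hf'_def
  have hr : Measurable (fun ω : (ℕ → Bool) × (ℕ → Bool) × (ℕ → Bool) =>
      ((ω.1, ω.2.1), ω.2.2)) :=
    (measurable_fst.prodMk (measurable_fst.comp measurable_snd)).prodMk
      (measurable_snd.comp measurable_snd)
  have hf'_pre : f' ⁻¹' {true}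
      = (fun ω : (ℕ → Bool) × (ℕ → Bool) × (ℕ → Bool) => ((ω.1, ω.2.1), ω.2.2)) ⁻¹' Sset := by
    ext ω; simp [hf'_def, hSset_def]
  have hf'_meas : Measurable f' := by
    apply measurable_to_countable'
    intro b
    rcases b
    · have : f' ⁻¹' {false} = (f' ⁻¹' {true})ᶜ := by
        ext ω; rcases h : f' ω <;> simp [h]
      rw [this, hf'_pre]
      exact (hr hSset).compl
    · rw [hf'_pre]; exact hr hSset
  set B : (ℕ → Bool) × (ℕ → Bool) × (ℕ → Bool) → Bool :=
    fun ω => xor (f ω.1) (f' ω) with hB_def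
  have hB : Measurable B := by
    have hfset3 : MeasurableSet {ω : (ℕ → Bool) × (ℕ → Bool) × (ℕ → Bool) | f ω.1 = true} :=
      (hf.comp measurable_fst) (measurableSet_singleton true)
    have heq : B = fun ω => if f ω.1 = true then ! f' ω else f' ω := by
      funext ω; by_cases h : f ω.1 <;> simp [hB_def, h]
    rw [heq]
    exact Measurable.ite hfset3
      ((Measurable.of_discrete (f := Bool.not)).comp hf'_meas) hf'_meas
  -- measure-theoretic preliminaries
  have hassoc : Measure.map (MeasurableEquiv.prodAssoc :
      ((ℕ → Bool) × (ℕ → Bool)) × (ℕ → Bool) ≃ᵐ (ℕ → Bool) × (ℕ → Bool) × (ℕ → Bool))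
      (ν.prod μz) = μ3 :=
    Measure.prodAssoc_prod
  -- the function inside the slice integral
  set G : (ℕ → Bool) × (ℕ → Bool) → ℝ :=
    fun ω => if f ω.1 then 1 - t1f ω else t0f ω with hG_def
  have hG_meas : Measurable G :=
    Measurable.ite hfset (measurable_const.sub ht1_meas) ht0_meas
  have hG_bd : ∀ ω, 0 ≤ G ω ∧ G ω ≤ 1 := by
    intro ω
    by_cases h : f ω.1 <;> simp only [hG_def, h, if_true, if_false]
    · exact ⟨by linarith [(ht1_bd ω).2], by linarith [(ht1_bd ω).1]⟩
    · exact ⟨(ht0_bd ω).1, (ht0_bd ω).2.le⟩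
  -- slice computation for the joint event
  have hsect : ∀ A : Set (ℕ → Bool), ∀ xy : (ℕ → Bool) × (ℕ → Bool),
      μz (Prod.mk xy ⁻¹' (MeasurableEquiv.prodAssoc ⁻¹' (B ⁻¹' {true} ∩ M' ⁻¹' A)))
        = Set.indicator (M ⁻¹' A) (fun ω => ENNReal.ofReal (G ω)) xy := by
    intro A xy
    by_cases hxA : (fun i => xy.1 i || xy.2 i) ∈ A
    · rw [Set.indicator_of_mem (show xy ∈ M ⁻¹' A from by simpa [hM_def] using hxA)]
      by_cases hfx : f xy.1
      · have hset : Prod.mk xy ⁻¹' (MeasurableEquiv.prodAssoc ⁻¹' (B ⁻¹' {true} ∩ M' ⁻¹' A))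
            = {z | ¬ lexLt z (dig (t1f xy))} := by
          ext z
          simp [hB_def, hf'_def, MeasurableEquiv.prodAssoc, Equiv.prodAssoc, hM'_def,
            hM_def, hxA, hfx, hT_def]
        rw [hset, lexLt_compl_measure hμz _ (ht1_bd xy).1 (ht1_bd xy).2, hG_def]
        simp [hfx]
      · have hset : Prod.mk xy ⁻¹' (MeasurableEquiv.prodAssoc ⁻¹' (B ⁻¹' {true} ∩ M' ⁻¹' A))
            = {z | lexLt z (dig (t0f xy))} := by
          ext z
          simp [hB_def, hf'_def, MeasurableEquiv.prodAssoc, Equiv.prodAssoc, hM'_def,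
            hM_def, hxA, hfx, hT_def]
        rw [hset, lexLt_measure hμz _ (ht0_bd xy).1 (ht0_bd xy).2, hG_def]
        simp [hfx]
    · rw [Set.indicator_of_notMem (show xy ∉ M ⁻¹' A from by simpa [hM_def] using hxA)]
      have hset : Prod.mk xy ⁻¹' (MeasurableEquiv.prodAssoc ⁻¹' (B ⁻¹' {true} ∩ M' ⁻¹' A))
          = ∅ := by
        ext z
        simp [hB_def, MeasurableEquiv.prodAssoc, Equiv.prodAssoc, hM'_def, hM_def, hxA]
      rw [hset]
      simp
  -- the key identity
  have key : ∀ A : Set (ℕ → Bool), MeasurableSet A →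
      μ3 (B ⁻¹' {true} ∩ M' ⁻¹' A) = 2⁻¹ * ν (M ⁻¹' A) := by
    intro A hA
    have hmeasS : MeasurableSet (B ⁻¹' {true} ∩ M' ⁻¹' A) :=
      (hB (measurableSet_singleton true)).inter (hM' hA)
    rw [← hassoc, Measure.map_apply MeasurableEquiv.prodAssoc.measurable hmeasS,
      Measure.prod_apply (MeasurableEquiv.prodAssoc.measurable hmeasS)]
    rw [lintegral_congr (hsect A), lintegral_indicator (hM hA)]
    -- convert to a Bochner integral
    have hG_int : IntegrableOn G (M ⁻¹' A) ν :=
      (hbint G 1 hG_meas fun ω => abs_le.mpr ⟨by linarith [(hG_bd ω).1], (hG_bd ω).2⟩).integrableOn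
    rw [← ofReal_integral_eq_lintegral_ofReal hG_int
      (Filter.Eventually.of_forall fun ω => (hG_bd ω).1)]
    -- compute the real integral via the conditional expectation
    have hs_m : MeasurableSet[mSigma] (M ⁻¹' A) := ⟨A, hA, rfl⟩
    set phi : (ℕ → Bool) × (ℕ → Bool) → ℝ := fun ω => 1 - t1f ω - t0f ω with hphi_def
    have hphi_m : Measurable[mSigma] phi := (measurable_const.sub ht1_m).sub ht0_m
    have hphi_meas : Measurable phi := (measurable_const.sub ht1_meas).sub ht0_meas
    have hphiF_int : Integrable (fun ω => phi ω * F ω) ν := by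
      refine hbint _ 3 (hphi_meas.mul hF_meas) fun ω => ?_
      have h1 := ht1_bd ω; have h0 := ht0_bd ω
      have : |phi ω| ≤ 3 := by
        rw [abs_le]; constructor <;> simp only [hphi_def] <;> nlinarith [h1.1, h1.2, h0.1, h0.2]
      rw [abs_mul]
      have hFb : |F ω| ≤ 1 := by by_cases h : f ω.1 <;> simp [hF_def, h]
      nlinarith [abs_nonneg (phi ω), abs_nonneg (F ω)]
    have hGdecomp : ∀ ω, G ω = phi ω * F ω + t0f ω := by
      intro ω
      by_cases h : f ω.1 <;> simp [hG_def, hF_def, hphi_def, h] <;> ring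
    have ht0_int : Integrable t0f ν := by
      refine hbint _ 1 ht0_meas fun ω => abs_le.mpr ⟨by linarith [(ht0_bd ω).1],
        (ht0_bd ω).2.le⟩
    have hpull : ν[(fun ω => phi ω * F ω)|mSigma] =ᵐ[ν] fun ω => phi ω * g ω :=
      condExp_mul_of_stronglyMeasurable_left (hphi_m.stronglyMeasurable) hphiF_int hF_int
    have hreal : ∫ ω in M ⁻¹' A, G ω ∂ν = (ν (M ⁻¹' A)).toReal * (1/2) := by
      calc ∫ ω in M ⁻¹' A, G ω ∂ν
          = ∫ ω in M ⁻¹' A, (phi ω * F ω + t0f ω) ∂ν := by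
            exact setIntegral_congr_ae (hm _ hs_m)
              (Filter.Eventually.of_forall fun ω _ => hGdecomp ω)
        _ = (∫ ω in M ⁻¹' A, phi ω * F ω ∂ν) + ∫ ω in M ⁻¹' A, t0f ω ∂ν :=
            integral_add hphiF_int.integrableOn ht0_int.integrableOn
        _ = (∫ ω in M ⁻¹' A, (ν[(fun ω => phi ω * F ω)|mSigma]) ω ∂ν)
              + ∫ ω in M ⁻¹' A, t0f ω ∂ν := by
            rw [setIntegral_condExp hm hphiF_int hs_m]
        _ = (∫ ω in M ⁻¹' A, phi ω * g ω ∂ν) + ∫ ω in M ⁻¹' A, t0f ω ∂ν := by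
            congr 1
            exact setIntegral_congr_ae (hm _ hs_m) (hpull.mono fun ω hω _ => hω)
        _ = ∫ ω in M ⁻¹' A, (phi ω * g ω + t0f ω) ∂ν := by
            rw [← integral_add ((integrable_condExp.bdd_mul (c := 3) hphi_meas.aestronglyMeasurable
              (Filter.Eventually.of_forall fun ω => by
                have h1 := ht1_bd ω; have h0 := ht0_bd ω
                simp only [Real.norm_eq_abs]
                rw [abs_le]
                constructor <;> simp only [hphi_def] <;>
                  nlinarith [h1.1, h1.2, h0.1, h0.2])).integrableOn) ht0_int.integrableOn]
        _ = ∫ ω in M ⁻¹' A, (1/2 : ℝ) ∂ν := by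
            refine setIntegral_congr_ae (hm _ hs_m) ?_
            filter_upwards [hg01] with ω hω _
            have hcg : c ω = g ω := clamp_eq _ hω.1 hω.2
            have := tau_id1 (g ω) hω.1 hω.2
            simp only [hphi_def, ht1f_def, ht0f_def, hcg] at *
            nlinarith [this]
        _ = (ν (M ⁻¹' A)).toReal * (1/2) := by
            rw [setIntegral_const, smul_eq_mul, measureReal_def]
    rw [hreal, ENNReal.ofReal_mul (ENNReal.toReal_nonneg), ENNReal.ofReal_toReal
      (measure_ne_top _ _), ofReal_half, mul_comm]
  -- marginal identity
  have hmarg : ∀ A : Set (ℕ → Bool), MeasurableSet A → μ3 (M' ⁻¹' A) = ν (M ⁻¹' A) := by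
    intro A hA
    rw [← hassoc, Measure.map_apply MeasurableEquiv.prodAssoc.measurable (hM' hA)]
    have hset : MeasurableEquiv.prodAssoc ⁻¹' (M' ⁻¹' A)
        = (M ⁻¹' A) ×ˢ (Set.univ : Set (ℕ → Bool)) := by
      ext p
      simp [MeasurableEquiv.prodAssoc, Equiv.prodAssoc, hM'_def, hM_def]
    rw [hset, Measure.prod_prod, measure_univ, mul_one]
  have key' : ∀ A : Set (ℕ → Bool), MeasurableSet A →
      μ3 (B ⁻¹' {true} ∩ M' ⁻¹' A) = 2⁻¹ * μ3 (M' ⁻¹' A) := by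
    intro A hA; rw [key A hA, hmarg A hA]
  have hBtrue : μ3 (B ⁻¹' {true}) = 2⁻¹ := by
    have h := key' Set.univ MeasurableSet.univ
    simpa [measure_univ] using h
  have hBmeas : MeasurableSet (B ⁻¹' {true}) := hB (measurableSet_singleton true)
  have hBfc : B ⁻¹' {false} = (B ⁻¹' {true})ᶜ := by
    ext ω; rcases h : B ω <;> simp [h]
  have h1half : (1 : ENNReal) - 2⁻¹ = 2⁻¹ := by
    rw [← ENNReal.inv_two_add_inv_two,
      ENNReal.add_sub_cancel_right (ENNReal.inv_ne_top.mpr (by norm_num))]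
  have hBfalse : μ3 (B ⁻¹' {false}) = 2⁻¹ := by
    rw [hBfc, measure_compl hBmeas (measure_ne_top _ _), measure_univ, hBtrue, h1half]
  have keyf : ∀ A : Set (ℕ → Bool), MeasurableSet A →
      μ3 (B ⁻¹' {false} ∩ M' ⁻¹' A) = 2⁻¹ * μ3 (M' ⁻¹' A) := by
    intro A hA
    have hsplit := measure_inter_add_diff (μ := μ3) (M' ⁻¹' A) hBmeas
    have hd : M' ⁻¹' A \ B ⁻¹' {true} = B ⁻¹' {false} ∩ M' ⁻¹' A := by
      ext ω; rcases h : B ω <;> simp [h, Set.mem_diff] <;> tauto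
    have hi : M' ⁻¹' A ∩ B ⁻¹' {true} = B ⁻¹' {true} ∩ M' ⁻¹' A := Set.inter_comm _ _
    rw [hi, hd, key' A hA] at hsplit
    have hX : μ3 (M' ⁻¹' A) = 2⁻¹ * μ3 (M' ⁻¹' A) + 2⁻¹ * μ3 (M' ⁻¹' A) := by
      rw [← add_mul, ENNReal.inv_two_add_inv_two, one_mul]
    nth_rewrite 2 [hX] at hsplit
    exact (ENNReal.add_right_inj
      (ENNReal.mul_ne_top (ENNReal.inv_ne_top.mpr (by norm_num))
        (measure_ne_top _ _))).mp hsplit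
  have hbern : ∀ a : Bool, _root_.bernoulliMeasure (1/2) {a} = 2⁻¹ := by
    intro a
    rcases a <;>
      · simp only [_root_.bernoulliMeasure, Measure.coe_add, Pi.add_apply, Measure.smul_apply,
          smul_eq_mul, Measure.dirac_apply' _ (measurableSet_singleton _)]
        norm_num [CorrectorAux.ofReal_half]
  refine ⟨f', hf'_meas, ?_, ?_, ?_⟩
  · refine Measure.ext_of_singleton fun a => ?_
    rw [Measure.map_apply hB (measurableSet_singleton a)]
    rcases a
    · rw [hBfalse, hbern false]
    · rw [hBtrue, hbern true]
  · rw [ProbabilityTheory.indepFun_iff_measure_inter_preimage_eq_mul]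
    intro s t hs ht
    have hscases : s = ∅ ∨ s = {true} ∨ s = {false} ∨ s = Set.univ := by
      by_cases h1 : true ∈ s <;> by_cases h2 : false ∈ s
      · right; right; right; ext b; rcases b <;> simp [h1, h2]
      · right; left; ext b; rcases b <;> simp [h1, h2]
      · right; right; left; ext b; rcases b <;> simp [h1, h2]
      · left; ext b; rcases b <;> simp [h1, h2]
    rcases hscases with rfl | rfl | rfl | rfl
    · simp
    · rw [key' t ht, hBtrue]
    · rw [keyf t ht, hBfalse]
    · rw [Set.preimage_univ, Set.univ_inter, measure_univ, one_mul]
  · have hpre3 : {ω : (ℕ → Bool) × (ℕ → Bool) × (ℕ → Bool) | f' ω = true}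
        = f' ⁻¹' {true} := rfl
    have hmeasf'true : MeasurableSet (f' ⁻¹' {true}) :=
      hf'_meas (measurableSet_singleton true)
    have hTsect : ∀ xy : (ℕ → Bool) × (ℕ → Bool),
        μz (Prod.mk xy ⁻¹' (MeasurableEquiv.prodAssoc ⁻¹' (f' ⁻¹' {true})))
          = ENNReal.ofReal (T xy) := by
      intro xy
      have hset : Prod.mk xy ⁻¹' (MeasurableEquiv.prodAssoc ⁻¹' (f' ⁻¹' {true}))
          = {z | lexLt z (dig (T xy))} := by
        ext z; simp [hf'_def, MeasurableEquiv.prodAssoc, Equiv.prodAssoc]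
      rw [hset, lexLt_measure hμz _ (hT_bd xy).1 (hT_bd xy).2]
    have hT_int : Integrable T ν := hbint _ 1 hT fun ω =>
      abs_le.mpr ⟨by linarith [(hT_bd ω).1], (hT_bd ω).2.le⟩
    have hμ3f' : μ3 (f' ⁻¹' {true}) = ENNReal.ofReal (∫ ω, T ω ∂ν) := by
      rw [← hassoc, Measure.map_apply MeasurableEquiv.prodAssoc.measurable hmeasf'true,
        Measure.prod_apply (MeasurableEquiv.prodAssoc.measurable hmeasf'true),
        lintegral_congr hTsect,
        ← ofReal_integral_eq_lintegral_ofReal hT_int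
          (Filter.Eventually.of_forall fun ω => (hT_bd ω).1)]
    set psi : (ℕ → Bool) × (ℕ → Bool) → ℝ := fun ω => t1f ω - t0f ω with hpsi_def
    have hpsi_m : Measurable[mSigma] psi := ht1_m.sub ht0_m
    have hpsi_meas : Measurable psi := ht1_meas.sub ht0_meas
    have hpsi_bd : ∀ ω, |psi ω| ≤ 2 := by
      intro ω
      have h1 := ht1_bd ω; have h0 := ht0_bd ω
      rw [abs_le]
      constructor <;> simp only [hpsi_def] <;> nlinarith [h1.1, h1.2, h0.1, h0.2]
    have hpsiF_int : Integrable (fun ω => psi ω * F ω) ν := by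
      refine hbint _ 2 (hpsi_meas.mul hF_meas) fun ω => ?_
      have hFb : |F ω| ≤ 1 := by by_cases h : f ω.1 <;> simp [hF_def, h]
      rw [abs_mul]
      nlinarith [abs_nonneg (psi ω), abs_nonneg (F ω), hpsi_bd ω]
    have hTdecomp : ∀ ω, T ω = psi ω * F ω + t0f ω := by
      intro ω; by_cases h : f ω.1 <;> simp [hT_def, hF_def, hpsi_def, h] <;> ring
    have hpull2 : ν[(fun ω => psi ω * F ω)|mSigma] =ᵐ[ν] fun ω => psi ω * g ω :=
      condExp_mul_of_stronglyMeasurable_left hpsi_m.stronglyMeasurable hpsiF_int hF_int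
    have ht0_int : Integrable t0f ν := hbint _ 1 ht0_meas fun ω =>
      abs_le.mpr ⟨by linarith [(ht0_bd ω).1], (ht0_bd ω).2.le⟩
    have hpsig_int : Integrable (fun ω => psi ω * g ω) ν :=
      integrable_condExp.bdd_mul (c := 2) hpsi_meas.aestronglyMeasurable
        (Filter.Eventually.of_forall fun ω => by simpa using hpsi_bd ω)
    have hint_eq : ∫ ω, T ω ∂ν = ∫ ω, |g ω - 1/2| ∂ν := by
      calc ∫ ω, T ω ∂ν
          = ∫ ω, (psi ω * F ω + t0f ω) ∂ν :=
            integral_congr_ae (Filter.Eventually.of_forall hTdecomp)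
        _ = (∫ ω, psi ω * F ω ∂ν) + ∫ ω, t0f ω ∂ν := integral_add hpsiF_int ht0_int
        _ = (∫ ω, (ν[(fun ω => psi ω * F ω)|mSigma]) ω ∂ν) + ∫ ω, t0f ω ∂ν := by
            rw [integral_condExp hm]
        _ = (∫ ω, psi ω * g ω ∂ν) + ∫ ω, t0f ω ∂ν := by
            congr 1; exact integral_congr_ae hpull2
        _ = ∫ ω, (psi ω * g ω + t0f ω) ∂ν := (integral_add hpsig_int ht0_int).symm
        _ = ∫ ω, |g ω - 1/2| ∂ν := by
            refine integral_congr_ae ?_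
            filter_upwards [hg01] with ω hω
            have hcg : c ω = g ω := clamp_eq _ hω.1 hω.2
            have h2 := tau_id2 (g ω) hω.1 hω.2
            simp only [hpsi_def, ht1f_def, ht0f_def, hcg]
            linear_combination h2
    have hf_ext' : ∫ ω, |g ω - 1/2| ∂ν < ε := hf_ext
    rw [hpre3, hμ3f', hint_eq]
    exact (ENNReal.ofReal_lt_ofReal_iff hε).mpr hf_ext'



end CorrectorAux

/-- Every `ε`-extractor `f` admits a corrector `f'`: on the triple product space with
`X ~ Bernoulli(p)^ℕ`, `Y ~ Bernoulli(q)^ℕ`, `Z ~ Bernoulli(1/2)^ℕ` independent,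
`f(X) ⊕ f'(X,Y,Z) ~ Bernoulli(1/2)`, `f(X) ⊕ f'(X,Y,Z)` is independent of `max(X,Y)`,
and `P(f'(X,Y,Z) = 1) < ε`. -/
theorem corrector_exists (p q : ℝ) (hp : 0 < p) (hp1 : p < 1) (hq : 0 < q) (hq1 : q < 1)
    (ε : ℝ) (hε : 0 < ε)
    (μp μq μz : Measure (ℕ → Bool))
    (hμp : IsBernoulliProduct p μp) (hμq : IsBernoulliProduct q μq)
    (hμz : IsBernoulliProduct (1/2) μz)
    (f : (ℕ → Bool) → Bool) (hf : Measurable f)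
    -- `f` is an `ε`-extractor:
    (hf_law : (μp.prod μq).map (fun ω => f ω.1) = _root_.bernoulliMeasure (1/2))
    (hf_ext : ∫ ω, |((μp.prod μq)[(fun ω : (ℕ → Bool) × (ℕ → Bool) =>
        if f ω.1 then (1:ℝ) else 0) |
        MeasurableSpace.comap
          (fun ω : (ℕ → Bool) × (ℕ → Bool) => fun i => max (ω.1 i) (ω.2 i))
          inferInstance]) ω - 1/2| ∂(μp.prod μq) < ε) :
    ∃ f' : (ℕ → Bool) × (ℕ → Bool) × (ℕ → Bool) → Bool, Measurable f' ∧
      (μp.prod (μq.prod μz)).map (fun ω => xor (f ω.1) (f' ω)) = _root_.bernoulliMeasure (1/2) ∧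
      IndepFun (fun ω => xor (f ω.1) (f' ω))
        (fun ω i => max (ω.1 i) (ω.2.1 i)) (μp.prod (μq.prod μz)) ∧
      (μp.prod (μq.prod μz)) {ω | f' ω = true} < ENNReal.ofReal ε :=
  CorrectorAux.main p q hp hp1 hq hq1 ε hε μp μq μz hμp hμq hμz f hf hf_law hf_ext
end

section
/- Let (Ω, F, P) be a probability space, let W : Ω → {0,1} be a random variable, let G ⊆ F be a sub-σ-algebra, and let U : Ω → [0,1] be uniformly distributed on [0,1] and independent of the σ-algebra σ(W) ∨ G. Then there exists a {0,1}-valued random variable C, measurable with respect to σ(W) ∨ G ∨ σ(U), such that: (i) W ⊕ C ~ Bernoulli(1/2); (ii) W ⊕ C is independent of G; and (iii) P(C = 1) = E[ | P(W = 0 | G) − 1/2 | ]. -/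
open MeasureTheory ProbabilityTheory

lemma unif_threshold {Ω : Type*} (V : MeasurableSpace Ω) [m0 : MeasurableSpace Ω]
    (μ : Measure Ω) [IsProbabilityMeasure μ]
    (U : Ω → ℝ) (hU : Measurable U)
    (hU_unif : μ.map U = volume.restrict (Set.Icc (0:ℝ) 1))
    (hV : V ≤ m0)
    (hindep : Indep (MeasurableSpace.comap U inferInstance) V μ)
    (t : Ω → ℝ) (ht : Measurable[V] t) (ht0 : ∀ ω, 0 ≤ t ω) (ht1 : ∀ ω, t ω ≤ 1)
    (B : Set Ω) (hB : MeasurableSet[V] B) :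
    μ (B ∩ {ω | U ω < t ω}) = ENNReal.ofReal (∫ ω in B, t ω ∂μ) := by
  classical
  set Y : Ω → ℝ × ℝ := fun ω => (t ω, B.indicator (fun _ => (1:ℝ)) ω) with hYdef
  have hYV : Measurable[V] Y :=
    Measurable.prodMk ht ((@measurable_const ℝ Ω _ V 1).indicator hB)
  have hY : Measurable[m0] Y := hYV.mono hV le_rfl
  have hindep' : Indep (MeasurableSpace.comap U inferInstance)
      (MeasurableSpace.comap Y inferInstance) μ :=
    indep_of_indep_of_le_right hindep hYV.comap_le
  have hIF : IndepFun U Y μ := hindep'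
  have hmap : μ.map (fun ω => (U ω, Y ω)) = (μ.map U).prod (μ.map Y) :=
    (indepFun_iff_map_prod_eq_prod_map_map hU.aemeasurable hY.aemeasurable).mp hIF
  set S : Set (ℝ × ℝ × ℝ) := {q | q.2.2 = 1 ∧ q.1 < q.2.1} with hSdef
  have hS : MeasurableSet S := by
    have h1 : MeasurableSet {q : ℝ × ℝ × ℝ | q.2.2 = 1} :=
      (measurable_snd.snd) (measurableSet_singleton 1)
    have h2 : MeasurableSet {q : ℝ × ℝ × ℝ | q.1 < q.2.1} :=
      measurableSet_lt measurable_fst measurable_snd.fst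
    exact h1.inter h2
  have hpre : B ∩ {ω | U ω < t ω} = (fun ω => (U ω, Y ω)) ⁻¹' S := by
    ext ω
    simp only [Set.mem_inter_iff, Set.mem_setOf_eq, Set.mem_preimage, hSdef, hYdef]
    constructor
    · rintro ⟨hb, hlt⟩; exact ⟨by simp [Set.indicator_of_mem hb], hlt⟩
    · rintro ⟨hb, hlt⟩
      refine ⟨?_, hlt⟩
      by_contra hmem
      simp [Set.indicator_of_notMem hmem] at hb
  rw [hpre, ← Measure.map_apply (hU.prodMk hY) hS, hmap,
    Measure.prod_apply_symm hS]
  have hslice : ∀ y : ℝ × ℝ, (μ.map U) ((fun x => (x, y)) ⁻¹' S) =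
      (if y.2 = 1 then ENNReal.ofReal (min y.1 1) else 0) := by
    intro y
    by_cases hy : y.2 = 1
    · have hset : ((fun x => (x, y)) ⁻¹' S) = Set.Iio y.1 := by
        ext x; simp [hSdef, hy]
      rw [hset, hU_unif, if_pos hy, Measure.restrict_apply measurableSet_Iio]
      by_cases h1 : y.1 ≤ 1
      · have : Set.Iio y.1 ∩ Set.Icc (0:ℝ) 1 = Set.Ico 0 y.1 := by
          ext x
          simp only [Set.mem_inter_iff, Set.mem_Iio, Set.mem_Icc, Set.mem_Ico]
          constructor
          · rintro ⟨ha, hb, _⟩; exact ⟨hb, ha⟩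
          · rintro ⟨ha, hb⟩; exact ⟨hb, ha, by linarith⟩
        rw [this, Real.volume_Ico, min_eq_left h1, sub_zero]
      · push_neg at h1
        have : Set.Iio y.1 ∩ Set.Icc (0:ℝ) 1 = Set.Icc 0 1 := by
          ext x
          simp only [Set.mem_inter_iff, Set.mem_Iio, Set.mem_Icc]
          exact ⟨fun h => h.2, fun h => ⟨by linarith [h.2], h⟩⟩
        rw [this, Real.volume_Icc, min_eq_right h1.le]
        norm_num
    · have hset : ((fun x => (x, y)) ⁻¹' S) = ∅ := by
        ext x; simp [hSdef, hy]
      rw [hset, if_neg hy]; simp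
  rw [lintegral_congr hslice]
  have hg : Measurable (fun y : ℝ × ℝ =>
      (if y.2 = 1 then ENNReal.ofReal (min y.1 1) else 0)) := by
    apply Measurable.ite (measurable_snd (measurableSet_singleton 1))
    · exact ENNReal.measurable_ofReal.comp (measurable_fst.min measurable_const)
    · exact measurable_const
  rw [lintegral_map hg hY]
  have hpt : (fun ω => if (Y ω).2 = 1 then ENNReal.ofReal (min (Y ω).1 1) else 0) =
      B.indicator (fun ω => ENNReal.ofReal (t ω)) := by
    funext ω
    by_cases hb : ω ∈ B
    · simp [hYdef, Set.indicator_of_mem hb, min_eq_left (ht1 ω)]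
    · simp [hYdef, Set.indicator_of_notMem hb]
  rw [hpt, show lintegral μ (B.indicator fun ω => ENNReal.ofReal (t ω)) =
    ∫⁻ ω in B, ENNReal.ofReal (t ω) ∂μ from lintegral_indicator (hV _ hB) _]
  have hint : Integrable t μ := by
    refine (integrable_const (1:ℝ)).mono' (ht.mono hV le_rfl).aestronglyMeasurable ?_
    exact .of_forall fun ω => by
      rw [Real.norm_eq_abs, abs_of_nonneg (ht0 ω)]; exact ht1 ω
  exact (ofReal_integral_eq_lintegral_ofReal hint.restrict
    (.of_forall fun ω => ht0 ω)).symm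


/-- The flip probability when `W = false`. -/
noncomputable def corrF (x : ℝ) : ℝ := if 1/2 ≤ x then (x - 1/2) / x else 0
/-- The flip probability when `W = true`. -/
noncomputable def corrG (x : ℝ) : ℝ := if 1/2 ≤ x then 0 else (1/2 - x) / (1 - x)

lemma corrF_meas : Measurable corrF := by
  unfold corrF
  exact Measurable.ite (measurableSet_le measurable_const measurable_id)
    ((measurable_id.sub measurable_const).div measurable_id) measurable_const

lemma corrG_meas : Measurable corrG := by
  unfold corrG
  exact Measurable.ite (measurableSet_le measurable_const measurable_id)
    measurable_const ((measurable_const.sub measurable_id).div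
      (measurable_const.sub measurable_id))

lemma corrF_nonneg (x : ℝ) : 0 ≤ corrF x := by
  unfold corrF; split_ifs with h
  · apply div_nonneg <;> linarith
  · exact le_refl 0
lemma corrF_le_one (x : ℝ) : corrF x ≤ 1 := by
  unfold corrF; split_ifs with h
  · rw [div_le_one (by linarith)]; linarith
  · norm_num
lemma corrG_nonneg (x : ℝ) : 0 ≤ corrG x := by
  unfold corrG; split_ifs with h
  · norm_num
  · push_neg at h; apply div_nonneg <;> linarith
lemma corrG_le_one (x : ℝ) : corrG x ≤ 1 := by
  unfold corrG; split_ifs with h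
  · norm_num
  · push_neg at h; rw [div_le_one (by linarith)]; linarith

lemma corr_identity1 {x : ℝ} (h0 : 0 ≤ x) (h1 : x ≤ 1) :
    x * corrF x + ((1 - x) - (1 - x) * corrG x) = 1/2 := by
  unfold corrF corrG; split_ifs with h
  · have hx : x ≠ 0 := by intro h'; rw [h'] at h; linarith
    field_simp
    ring
  · push_neg at h
    have hx : (1:ℝ) - x ≠ 0 := by intro h'; nlinarith
    field_simp
    ring

lemma corr_identity2 {x : ℝ} (h0 : 0 ≤ x) (h1 : x ≤ 1) :
    x * corrF x + (1 - x) * corrG x = |x - 1/2| := by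
  unfold corrF corrG; split_ifs with h
  · rw [abs_of_nonneg (by linarith)]
    have hx : x ≠ 0 := by intro h'; rw [h'] at h; linarith
    field_simp
    ring
  · push_neg at h
    rw [abs_of_neg (by linarith)]
    have hx : (1:ℝ) - x ≠ 0 := by intro h'; nlinarith
    field_simp
    ring

/-- Pull-out property in set-integral form. -/
lemma setIntegral_mul_condexp {Ω : Type*} (G : MeasurableSpace Ω) [m0 : MeasurableSpace Ω]
    (hG : G ≤ m0) (μ : Measure Ω) [IsProbabilityMeasure μ]
    (q h : Ω → ℝ) (hq : Measurable q) (hq_bdd : ∀ ω, |q ω| ≤ 1)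
    (hh : StronglyMeasurable[G] h) (hh_bdd : ∀ ω, |h ω| ≤ 1)
    (A : Set Ω) (hA : MeasurableSet[G] A) :
    ∫ ω in A, h ω * q ω ∂μ = ∫ ω in A, h ω * (μ[q|G]) ω ∂μ := by
  haveI : SigmaFinite (μ.trim hG) := by infer_instance
  have hint_q : Integrable q μ := by
    refine (integrable_const (1:ℝ)).mono' hq.aestronglyMeasurable ?_
    exact .of_forall fun ω => by rw [Real.norm_eq_abs]; exact hq_bdd ω
  have hint_hq : Integrable (h * q) μ := by
    refine (integrable_const (1:ℝ)).mono'
      ((hh.mono hG).aestronglyMeasurable.mul hq.aestronglyMeasurable) ?_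
    refine .of_forall fun ω => ?_
    rw [Pi.mul_apply, Real.norm_eq_abs, abs_mul]
    calc |h ω| * |q ω| ≤ 1 * 1 :=
          mul_le_mul (hh_bdd ω) (hq_bdd ω) (abs_nonneg _) zero_le_one
      _ = 1 := by norm_num
  have h1 : ∫ ω in A, h ω * q ω ∂μ = ∫ ω in A, (μ[h * q|G]) ω ∂μ :=
    (setIntegral_condExp hG hint_hq hA).symm
  have h2 : μ[h * q|G] =ᵐ[μ] h * μ[q|G] :=
    condExp_mul_of_stronglyMeasurable_left hh hint_hq hint_q
  rw [h1]
  exact setIntegral_congr_ae (hG _ hA) (h2.mono fun ω hω _ => hω)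

lemma corrector_core {Ω : Type*} (G V : MeasurableSpace Ω) [m0 : MeasurableSpace Ω]
    (μ : Measure Ω) [IsProbabilityMeasure μ]
    (W : Ω → Bool) (hW : Measurable W)
    (U : Ω → ℝ) (hU : Measurable U)
    (hU_unif : μ.map U = volume.restrict (Set.Icc (0:ℝ) 1))
    (hG : G ≤ m0)
    (hVeq : V = (MeasurableSpace.comap W inferInstance) ⊔ G)
    (hU_indep : Indep (MeasurableSpace.comap U inferInstance)
      ((MeasurableSpace.comap W inferInstance) ⊔ G) μ) :
    ∃ C : Ω → Bool,
      Measurable[(MeasurableSpace.comap W inferInstance) ⊔ G ⊔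
        (MeasurableSpace.comap U inferInstance)] C ∧
      @Measure.map Ω Bool m0 inferInstance (fun ω => xor (W ω) (C ω)) μ =
        _root_.bernoulliMeasure (1/2) ∧
      Indep (MeasurableSpace.comap (fun ω => xor (W ω) (C ω)) inferInstance) G μ ∧
      (μ {ω | C ω = true}).toReal =
        ∫ ω, |(μ[(fun ω => if W ω = false then (1:ℝ) else 0) | G]) ω - 1/2| ∂μ := by
  classical
  have hV : V ≤ m0 := by rw [hVeq]; exact sup_le hW.comap_le hG
  have hGV : G ≤ V := by rw [hVeq]; exact le_sup_right
  have hU_indepV : Indep (MeasurableSpace.comap U inferInstance) V μ := by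
    rw [hVeq]; exact hU_indep
  set W0 : Ω → ℝ := fun ω => if W ω = false then (1:ℝ) else 0 with hW0def
  have hW0_meas : Measurable W0 := by
    apply Measurable.ite (hW (measurableSet_singleton false)) <;> exact measurable_const
  have hW0_bdd : ∀ ω, |W0 ω| ≤ 1 := by
    intro ω; simp only [hW0def]; split_ifs <;> norm_num
  set p : Ω → ℝ := μ[W0|G] with hpdef
  have hp_sm : StronglyMeasurable[G] p := stronglyMeasurable_condExp
  have hp_measG : Measurable[G] p := hp_sm.measurable
  have hp_meas : Measurable p := hp_measG.mono hG le_rfl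
  have hW0_int : Integrable W0 μ := by
    refine (integrable_const (1:ℝ)).mono' hW0_meas.aestronglyMeasurable ?_
    exact .of_forall fun ω => by rw [Real.norm_eq_abs]; exact hW0_bdd ω
  have hp0 : 0 ≤ᵐ[μ] p :=
    condExp_nonneg (.of_forall fun ω => by simp only [hW0def]; split_ifs <;> norm_num)
  have hp1 : p ≤ᵐ[μ] fun _ => (1:ℝ) := by
    have h := condExp_mono (μ := μ) (m := G) hW0_int (integrable_const (1:ℝ))
      (.of_forall fun ω => by simp only [hW0def]; split_ifs <;> norm_num)
    have hc : μ[(fun _ => (1:ℝ))|G] = fun _ => (1:ℝ) := condExp_const hG 1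
    rw [hc] at h; exact h
  -- the threshold
  set τ : Ω → ℝ := fun ω => if W ω = false then corrF (p ω) else corrG (p ω) with hτdef
  have hWV : Measurable[V] W := by
    rw [hVeq]; exact Measurable.of_comap_le le_sup_left
  have hpV : Measurable[V] p := hp_measG.mono hGV le_rfl
  have hτV : Measurable[V] τ := by
    apply Measurable.ite (hWV (measurableSet_singleton false))
    · exact corrF_meas.comp hpV
    · exact corrG_meas.comp hpV
  have hτ : Measurable τ := hτV.mono hV le_rfl
  have hτ0 : ∀ ω, 0 ≤ τ ω := fun ω => by
    simp only [hτdef]; split_ifs; exacts [corrF_nonneg _, corrG_nonneg _]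
  have hτ1 : ∀ ω, τ ω ≤ 1 := fun ω => by
    simp only [hτdef]; split_ifs; exacts [corrF_le_one _, corrG_le_one _]
  -- the corrector bit
  set C : Ω → Bool := fun ω => decide (U ω < τ ω) with hCdef
  set Sf : Set Ω := {ω | W ω = false} with hSfdef
  set St : Set Ω := {ω | W ω = true} with hStdef
  set Lt : Set Ω := {ω | U ω < τ ω} with hLtdef
  have hSf : MeasurableSet Sf := hW (measurableSet_singleton false)
  have hSt : MeasurableSet St := hW (measurableSet_singleton true)
  have hSfV : MeasurableSet[V] Sf := hWV (measurableSet_singleton false)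
  have hStV : MeasurableSet[V] St := hWV (measurableSet_singleton true)
  have hLt : MeasurableSet Lt := measurableSet_lt hU hτ
  -- integrability
  have fp_bdd : ∀ ω, |corrF (p ω)| ≤ 1 := fun ω => by
    rw [abs_of_nonneg (corrF_nonneg _)]; exact corrF_le_one _
  have gp_bdd : ∀ ω, |corrG (p ω)| ≤ 1 := fun ω => by
    rw [abs_of_nonneg (corrG_nonneg _)]; exact corrG_le_one _
  have hq2_bdd : ∀ ω, |1 - W0 ω| ≤ 1 := by
    intro ω; simp only [hW0def]; split_ifs <;> norm_num
  have hfp_sm : StronglyMeasurable[G] (fun ω => corrF (p ω)) :=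
    (corrF_meas.comp hp_measG).stronglyMeasurable
  have hgp_sm : StronglyMeasurable[G] (fun ω => corrG (p ω)) :=
    (corrG_meas.comp hp_measG).stronglyMeasurable
  have hp_int : Integrable p μ := integrable_condExp
  have int_fp_p : Integrable (fun ω => corrF (p ω) * p ω) μ :=
    hp_int.bdd_mul (c := 1) (corrF_meas.comp hp_meas).aestronglyMeasurable
      (.of_forall fun ω => by rw [Real.norm_eq_abs]; exact fp_bdd ω)
  have hp1' : Integrable (fun ω => 1 - p ω) μ := (integrable_const (1:ℝ)).sub hp_int
  have int_gp_1p : Integrable (fun ω => corrG (p ω) * (1 - p ω)) μ :=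
    hp1'.bdd_mul (c := 1) (corrG_meas.comp hp_meas).aestronglyMeasurable
      (.of_forall fun ω => by rw [Real.norm_eq_abs]; exact gp_bdd ω)
  -- conditional expectation of 1 - W0
  have hce_sub : μ[(fun ω => 1 - W0 ω)|G] =ᵐ[μ] fun ω => 1 - p ω := by
    have h1 : (fun ω => 1 - W0 ω) = (fun _ => (1:ℝ)) - W0 := rfl
    rw [h1]
    have h2 := condExp_sub (μ := μ) (m := G) (integrable_const (1:ℝ)) hW0_int
    have hc : μ[(fun _ => (1:ℝ))|G] = fun _ => (1:ℝ) := condExp_const hG 1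
    refine h2.trans ?_
    rw [hc]
    exact .of_forall fun ω => rfl
  -- key event computations
  have key1 : ∀ A : Set Ω, MeasurableSet[G] A →
      μ ((A ∩ Sf) ∩ Lt) = ENNReal.ofReal (∫ ω in A, corrF (p ω) * p ω ∂μ) := by
    intro A hA
    have hAV : MeasurableSet[V] A := hGV _ hA
    have hB : MeasurableSet[V] (A ∩ Sf) := hAV.inter hSfV
    rw [unif_threshold V μ U hU hU_unif hV hU_indepV τ hτV hτ0 hτ1 _ hB]
    congr 1
    have e1 : ∫ ω in A ∩ Sf, τ ω ∂μ = ∫ ω in A ∩ Sf, corrF (p ω) ∂μ := by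
      refine setIntegral_congr_fun (hV _ hB) fun ω hω => ?_
      simp only [hτdef]
      have hωf : W ω = false := hω.2
      rw [if_pos hωf]
    have e2 : ∫ ω in A ∩ Sf, corrF (p ω) ∂μ
        = ∫ ω in A, Sf.indicator (fun ω => corrF (p ω)) ω ∂μ := by
      rw [setIntegral_indicator hSf]
    have e3 : (fun ω => Sf.indicator (fun ω => corrF (p ω)) ω)
        = fun ω => corrF (p ω) * W0 ω := by
      funext ω
      by_cases hb : ω ∈ Sf
      · rw [Set.indicator_of_mem hb]
        simp only [hW0def]
        have hωf : W ω = false := hb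
        rw [if_pos hωf, mul_one]
      · rw [Set.indicator_of_notMem hb]
        simp only [hW0def]
        have hωf : ¬ (W ω = false) := hb
        rw [if_neg hωf, mul_zero]
    rw [e1, e2, e3,
      setIntegral_mul_condexp G hG μ W0 _ hW0_meas hW0_bdd hfp_sm fp_bdd A hA]
  have key2 : ∀ A : Set Ω, MeasurableSet[G] A →
      μ ((A ∩ St) ∩ Lt) = ENNReal.ofReal (∫ ω in A, corrG (p ω) * (1 - p ω) ∂μ) := by
    intro A hA
    have hAV : MeasurableSet[V] A := hGV _ hA
    have hB : MeasurableSet[V] (A ∩ St) := hAV.inter hStV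
    rw [unif_threshold V μ U hU hU_unif hV hU_indepV τ hτV hτ0 hτ1 _ hB]
    congr 1
    have e1 : ∫ ω in A ∩ St, τ ω ∂μ = ∫ ω in A ∩ St, corrG (p ω) ∂μ := by
      refine setIntegral_congr_fun (hV _ hB) fun ω hω => ?_
      simp only [hτdef]
      have hωt : W ω = true := hω.2
      rw [if_neg (by simp [hωt])]
    have e2 : ∫ ω in A ∩ St, corrG (p ω) ∂μ
        = ∫ ω in A, St.indicator (fun ω => corrG (p ω)) ω ∂μ := by
      rw [setIntegral_indicator hSt]
    have e3 : (fun ω => St.indicator (fun ω => corrG (p ω)) ω)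
        = fun ω => corrG (p ω) * (1 - W0 ω) := by
      funext ω
      by_cases hb : ω ∈ St
      · rw [Set.indicator_of_mem hb]
        simp only [hW0def]
        have hωt : W ω = true := hb
        rw [if_neg (by simp [hωt])]
        ring
      · rw [Set.indicator_of_notMem hb]
        simp only [hW0def]
        have hωf : W ω = false := by
          have h' : ¬ (W ω = true) := hb
          simpa using h'
        rw [if_pos hωf]
        ring
    rw [e1, e2, e3,
      setIntegral_mul_condexp G hG μ (fun ω => 1 - W0 ω) _
        (measurable_const.sub hW0_meas) hq2_bdd hgp_sm gp_bdd A hA]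
    refine setIntegral_congr_ae (hG _ hA) ?_
    filter_upwards [hce_sub] with ω hω _
    rw [hω]
  have key3 : ∀ A : Set Ω, MeasurableSet[G] A →
      μ (A ∩ St) = ENNReal.ofReal (∫ ω in A, (1 - p ω) ∂μ) := by
    intro A hA
    have e3 : (fun ω => St.indicator (fun _ => (1:ℝ)) ω) = fun ω => 1 - W0 ω := by
      funext ω
      by_cases hb : ω ∈ St
      · rw [Set.indicator_of_mem hb]
        simp only [hW0def]
        have hωt : W ω = true := hb
        rw [if_neg (by simp [hωt])]; ring
      · rw [Set.indicator_of_notMem hb]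
        simp only [hW0def]
        have hωf : W ω = false := by
          have h' : ¬ (W ω = true) := hb
          simpa using h'
        rw [if_pos hωf]; ring
    have e0 : μ (A ∩ St) = ENNReal.ofReal (∫ ω in A, (1 - W0 ω) ∂μ) := by
      rw [← e3, setIntegral_indicator hSt, setIntegral_const, smul_eq_mul, mul_one, measureReal_def,
        ENNReal.ofReal_toReal (measure_ne_top μ _)]
    rw [e0]
    congr 1
    have h1 : ∫ ω in A, (1 - W0 ω) ∂μ = ∫ ω in A, (1:ℝ) * (1 - W0 ω) ∂μ := by
      simp
    have h2 : ∫ ω in A, (1:ℝ) * (1 - p ω) ∂μ = ∫ ω in A, (1 - p ω) ∂μ := by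
      simp
    rw [h1, ← h2,
      setIntegral_mul_condexp G hG μ (fun ω => 1 - W0 ω) _
        (measurable_const.sub hW0_meas) hq2_bdd
        stronglyMeasurable_const (fun _ => by norm_num) A hA]
    refine setIntegral_congr_ae (hG _ hA) ?_
    filter_upwards [hce_sub] with ω hω _
    rw [hω]
  -- the corrected bit and its event
  set X : Ω → Bool := fun ω => xor (W ω) (C ω) with hXdef
  set T : Set Ω := {ω | X ω = true} with hTdef
  have hTeq : T = (Sf ∩ Lt) ∪ (St ∩ Ltᶜ) := by
    ext ω
    simp only [hTdef, hXdef, hCdef, hSfdef, hStdef, hLtdef, Set.mem_setOf_eq,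
      Set.mem_union, Set.mem_inter_iff, Set.mem_compl_iff]
    cases h : W ω <;> simp [h]
  have hT_meas : MeasurableSet T := by
    rw [hTeq]; exact (hSf.inter hLt).union (hSt.inter hLt.compl)
  -- a.e. nonnegativity facts
  have ae_fp : ∀ᵐ ω ∂μ, 0 ≤ corrF (p ω) * p ω := by
    filter_upwards [hp0] with ω h0
    exact mul_nonneg (corrF_nonneg _) h0
  have ae_gp : ∀ᵐ ω ∂μ, 0 ≤ corrG (p ω) * (1 - p ω) := by
    filter_upwards [hp1] with ω h1
    exact mul_nonneg (corrG_nonneg _) (by simpa using sub_nonneg.mpr h1)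
  have ae_1p : ∀ᵐ ω ∂μ, 0 ≤ 1 - p ω := by
    filter_upwards [hp1] with ω h1
    simpa using sub_nonneg.mpr h1
  -- half measure of A ∩ T for A ∈ G
  have keyT : ∀ A : Set Ω, MeasurableSet[G] A →
      (μ (A ∩ T)).toReal = (μ A).toReal * (1/2) := by
    intro A hA
    have hsplit : A ∩ T = ((A ∩ Sf) ∩ Lt) ∪ ((A ∩ St) ∩ Ltᶜ) := by
      rw [hTeq, Set.inter_union_distrib_left, ← Set.inter_assoc, ← Set.inter_assoc]
    have hdisj : Disjoint ((A ∩ Sf) ∩ Lt) ((A ∩ St) ∩ Ltᶜ) := by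
      rw [Set.disjoint_left]
      intro ω h1 h2
      have hf : W ω = false := h1.1.2
      have ht : W ω = true := h2.1.2
      rw [hf] at ht; exact Bool.noConfusion ht
    have hmu : μ (A ∩ T) = μ ((A ∩ Sf) ∩ Lt) + μ ((A ∩ St) ∩ Ltᶜ) := by
      rw [hsplit]
      exact measure_union hdisj (((hG _ hA).inter hSt).inter hLt.compl)
    have hd : μ ((A ∩ St) ∩ Lt) + μ ((A ∩ St) ∩ Ltᶜ) = μ (A ∩ St) := by
      rw [← Set.diff_eq]
      exact measure_inter_add_diff _ hLt
    -- real values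
    have v1 : (μ ((A ∩ Sf) ∩ Lt)).toReal = ∫ ω in A, corrF (p ω) * p ω ∂μ := by
      rw [key1 A hA, ENNReal.toReal_ofReal]
      exact integral_nonneg_of_ae (ae_restrict_of_ae ae_fp)
    have v2 : (μ ((A ∩ St) ∩ Lt)).toReal = ∫ ω in A, corrG (p ω) * (1 - p ω) ∂μ := by
      rw [key2 A hA, ENNReal.toReal_ofReal]
      exact integral_nonneg_of_ae (ae_restrict_of_ae ae_gp)
    have v3 : (μ (A ∩ St)).toReal = ∫ ω in A, (1 - p ω) ∂μ := by
      rw [key3 A hA, ENNReal.toReal_ofReal]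
      exact integral_nonneg_of_ae (ae_restrict_of_ae ae_1p)
    have v4 : (μ ((A ∩ St) ∩ Ltᶜ)).toReal
        = ∫ ω in A, (1 - p ω) ∂μ - ∫ ω in A, corrG (p ω) * (1 - p ω) ∂μ := by
      have := congrArg ENNReal.toReal hd
      rw [ENNReal.toReal_add (measure_ne_top μ _) (measure_ne_top μ _), v2, v3] at this
      linarith
    have vsum : (μ (A ∩ T)).toReal
        = ∫ ω in A, corrF (p ω) * p ω ∂μ
          + (∫ ω in A, (1 - p ω) ∂μ - ∫ ω in A, corrG (p ω) * (1 - p ω) ∂μ) := by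
      rw [hmu, ENNReal.toReal_add (measure_ne_top μ _) (measure_ne_top μ _), v1, v4]
    have int_diff : Integrable (fun ω => (1 - p ω) - corrG (p ω) * (1 - p ω)) μ :=
      hp1'.sub int_gp_1p
    rw [vsum, ← integral_sub hp1'.integrableOn int_gp_1p.integrableOn,
      ← integral_add int_fp_p.integrableOn int_diff.integrableOn]
    have hcongr : ∫ ω in A, (corrF (p ω) * p ω + ((1 - p ω) - corrG (p ω) * (1 - p ω))) ∂μ
        = ∫ ω in A, (1/2 : ℝ) ∂μ := by
      refine setIntegral_congr_ae (hG _ hA) ?_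
      filter_upwards [hp0, hp1] with ω h0 h1 _
      have := corr_identity1 h0 (by simpa using h1)
      rw [mul_comm (corrF (p ω)) (p ω), mul_comm (corrG (p ω)) (1 - p ω)] at *
      linarith
    rw [hcongr, setIntegral_const, smul_eq_mul, measureReal_def]
  -- measure of T
  have hμT : μ T = ENNReal.ofReal (1/2) := by
    have h := keyT Set.univ MeasurableSet.univ
    rw [Set.univ_inter, measure_univ] at h
    simp only [ENNReal.toReal_one, one_mul] at h
    rw [← ENNReal.ofReal_toReal (measure_ne_top μ T), h]
  have hμT_toReal : (μ T).toReal = 1/2 := by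
    rw [hμT]; exact ENNReal.toReal_ofReal (by norm_num)
  -- measurability of C and X
  have hpreC : C ⁻¹' {true} = Lt := by
    ext ω
    simp [hCdef, hLtdef]
  have hMC : Measurable[V ⊔ (MeasurableSpace.comap U inferInstance)] C := by
    refine @measurable_to_bool Ω (V ⊔ (MeasurableSpace.comap U inferInstance)) C ?_
    rw [hpreC, hLtdef]
    have hUM : Measurable[V ⊔ (MeasurableSpace.comap U inferInstance)] U :=
      Measurable.of_comap_le le_sup_right
    have hτM : Measurable[V ⊔ (MeasurableSpace.comap U inferInstance)] τ :=
      hτV.mono le_sup_left le_rfl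
    exact measurableSet_lt hUM hτM
  have hC_meas : Measurable C := by
    refine hMC.mono ?_ le_rfl
    exact sup_le hV hU.comap_le
  have hpreXtrue : X ⁻¹' {true} = T := by
    ext ω; simp [hTdef]
  have hpreXfalse : X ⁻¹' {false} = Tᶜ := by
    ext ω
    simp only [Set.mem_preimage, Set.mem_singleton_iff, Set.mem_compl_iff, hTdef,
      Set.mem_setOf_eq]
    cases h : X ω <;> simp
  have hX_meas : Measurable X := by
    apply measurable_to_bool
    rw [hpreXtrue]; exact hT_meas
  -- conclusion 1 : measurability
  have concl1 : Measurable[(MeasurableSpace.comap W inferInstance) ⊔ G ⊔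
      (MeasurableSpace.comap U inferInstance)] C := by
    have := hMC; rw [hVeq] at this; exact this
  -- conclusion 2 : the law of X
  have hμTc : μ Tᶜ = ENNReal.ofReal (1/2) := by
    rw [measure_compl hT_meas (measure_ne_top μ T), measure_univ, hμT]
    rw [← ENNReal.ofReal_one, ← ENNReal.ofReal_sub _ (by norm_num : (0:ℝ) ≤ 1/2)]
    norm_num
  have concl2 : @Measure.map Ω Bool m0 inferInstance X μ = _root_.bernoulliMeasure (1/2) := by
    refine MeasureTheory.Measure.ext_of_singleton fun b => ?_
    rw [Measure.map_apply hX_meas (measurableSet_singleton b)]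
    cases b
    · rw [hpreXfalse, hμTc]
      simp [_root_.bernoulliMeasure]
      norm_num [ENNReal.ofReal_div_of_pos]
    · rw [hpreXtrue, hμT]
      simp [_root_.bernoulliMeasure]
  -- conclusion 3 : independence
  have concl3 : Indep (MeasurableSpace.comap X inferInstance) G μ := by
    rw [indep_iff_forall_indepSet]
    intro s A hs hA
    obtain ⟨b, -, rfl⟩ := hs
    rw [indepSet_iff_measure_inter_eq_mul (hX_meas (by trivial)) (hG _ hA) μ]
    by_cases h1 : true ∈ b <;> by_cases h2 : false ∈ b
    · have hbu : X ⁻¹' b = Set.univ := by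
        ext ω
        simp only [Set.mem_preimage, Set.mem_univ, iff_true]
        cases h : X ω
        · exact h2
        · exact h1
      rw [hbu, Set.univ_inter, measure_univ, one_mul]
    · have hbt : X ⁻¹' b = T := by
        ext ω
        simp only [Set.mem_preimage, hTdef, Set.mem_setOf_eq]
        cases h : X ω <;> simp [h1, h2]
      rw [hbt]
      refine (ENNReal.toReal_eq_toReal_iff' (measure_ne_top μ _) ?_).mp ?_
      · exact ENNReal.mul_ne_top (measure_ne_top μ _) (measure_ne_top μ _)
      · rw [ENNReal.toReal_mul, hμT_toReal, Set.inter_comm, keyT A hA]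
        ring
    · have hbt : X ⁻¹' b = Tᶜ := by
        ext ω
        simp only [Set.mem_preimage, Set.mem_compl_iff, hTdef, Set.mem_setOf_eq]
        cases h : X ω <;> simp [h1, h2]
      rw [hbt]
      have hdd : μ (A ∩ T) + μ (A ∩ Tᶜ) = μ A := by
        rw [← Set.diff_eq]
        exact measure_inter_add_diff _ hT_meas
      refine (ENNReal.toReal_eq_toReal_iff' (measure_ne_top μ _) ?_).mp ?_
      · exact ENNReal.mul_ne_top (measure_ne_top μ _) (measure_ne_top μ _)
      · have := congrArg ENNReal.toReal hdd
        rw [ENNReal.toReal_add (measure_ne_top μ _) (measure_ne_top μ _)] at this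
        have hk := keyT A hA
        rw [ENNReal.toReal_mul, Set.inter_comm Tᶜ A]
        have hμTc_toReal : (μ Tᶜ).toReal = 1/2 := by
          rw [hμTc]; exact ENNReal.toReal_ofReal (by norm_num)
        rw [hμTc_toReal]
        linarith
    · have hbe : X ⁻¹' b = ∅ := by
        ext ω
        simp only [Set.mem_preimage, Set.mem_empty_iff_false, iff_false]
        intro hmem
        cases h : X ω
        · rw [h] at hmem; exact h2 hmem
        · rw [h] at hmem; exact h1 hmem
      rw [hbe, Set.empty_inter, measure_empty, zero_mul]
  -- conclusion 4 : probability of correction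
  have concl4 : (μ {ω | C ω = true}).toReal = ∫ ω, |p ω - 1/2| ∂μ := by
    have hCt : {ω | C ω = true} = Lt := by
      ext ω; simp [hCdef, hLtdef]
    have hLtsplit : Lt = ((Set.univ ∩ Sf) ∩ Lt) ∪ ((Set.univ ∩ St) ∩ Lt) := by
      rw [Set.univ_inter, Set.univ_inter, ← Set.union_inter_distrib_right]
      have huniv : Sf ∪ St = Set.univ := by
        ext ω
        simp only [Set.mem_union, hSfdef, hStdef, Set.mem_setOf_eq, Set.mem_univ, iff_true]
        cases h : W ω
        · exact Or.inl rfl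
        · exact Or.inr rfl
      rw [huniv, Set.univ_inter]
    have hdisj : Disjoint ((Set.univ ∩ Sf) ∩ Lt) ((Set.univ ∩ St) ∩ Lt) := by
      rw [Set.disjoint_left]
      intro ω h1 h2
      have hf : W ω = false := h1.1.2
      have ht : W ω = true := h2.1.2
      rw [hf] at ht; exact Bool.noConfusion ht
    have hmu : μ Lt = μ ((Set.univ ∩ Sf) ∩ Lt) + μ ((Set.univ ∩ St) ∩ Lt) := by
      conv_lhs => rw [hLtsplit]
      exact measure_union hdisj ((MeasurableSet.univ.inter hSt).inter hLt)
    have v1 : (μ ((Set.univ ∩ Sf) ∩ Lt)).toReal = ∫ ω, corrF (p ω) * p ω ∂μ := by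
      rw [key1 Set.univ MeasurableSet.univ, ENNReal.toReal_ofReal
        (integral_nonneg_of_ae (ae_restrict_of_ae ae_fp)), Measure.restrict_univ]
    have v2 : (μ ((Set.univ ∩ St) ∩ Lt)).toReal = ∫ ω, corrG (p ω) * (1 - p ω) ∂μ := by
      rw [key2 Set.univ MeasurableSet.univ, ENNReal.toReal_ofReal
        (integral_nonneg_of_ae (ae_restrict_of_ae ae_gp)), Measure.restrict_univ]
    have hsum : (μ Lt).toReal
        = ∫ ω, corrF (p ω) * p ω ∂μ + ∫ ω, corrG (p ω) * (1 - p ω) ∂μ := by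
      rw [hmu, ENNReal.toReal_add (measure_ne_top μ _) (measure_ne_top μ _), v1, v2]
    rw [hCt, hsum, ← integral_add int_fp_p int_gp_1p]
    refine integral_congr_ae ?_
    filter_upwards [hp0, hp1] with ω h0 h1
    have hid := corr_identity2 h0 (by simpa using h1)
    rw [mul_comm (p ω) (corrF (p ω)), mul_comm (1 - p ω) (corrG (p ω))] at hid
    exact hid
  exact ⟨C, concl1, concl2, concl3, concl4⟩

/-- Abstract corrector lemma: given a `{0,1}`-valued random variable `W`, a sub-σ-algebra `G`,
and a uniform `[0,1]` random variable `U` independent of `σ(W) ⊔ G`, there is a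
`σ(W) ⊔ G ⊔ σ(U)`-measurable bit `C` with `W ⊕ C ~ Bernoulli(1/2)`, `W ⊕ C` independent of `G`,
and `P(C = 1) = E[|P(W = 0 | G) - 1/2|]`. -/
theorem abstract_corrector {Ω : Type*} [m0 : MeasurableSpace Ω]
    (μ : Measure Ω) [IsProbabilityMeasure μ]
    (W : Ω → Bool) (hW : Measurable W)
    (U : Ω → ℝ) (hU : Measurable U)
    (hU_unif : μ.map U = volume.restrict (Set.Icc (0:ℝ) 1))
    (G : MeasurableSpace Ω) (hG : G ≤ m0)
    (hU_indep : Indep (MeasurableSpace.comap U inferInstance)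
      ((MeasurableSpace.comap W inferInstance) ⊔ G) μ) :
    ∃ C : Ω → Bool,
      Measurable[(MeasurableSpace.comap W inferInstance) ⊔ G ⊔
        (MeasurableSpace.comap U inferInstance)] C ∧
      @Measure.map Ω Bool m0 inferInstance (fun ω => xor (W ω) (C ω)) μ =
        _root_.bernoulliMeasure (1/2) ∧
      Indep (MeasurableSpace.comap (fun ω => xor (W ω) (C ω)) inferInstance) G μ ∧
      (μ {ω | C ω = true}).toReal =
        ∫ ω, |(μ[(fun ω => if W ω = false then (1:ℝ) else 0) | G]) ω - 1/2| ∂μ := by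
  exact corrector_core (m0 := m0) G ((MeasurableSpace.comap W inferInstance) ⊔ G) μ W hW U hU
    hU_unif hG rfl hU_indep
end

section
/- Let 0 < p < 1, 0 < q < 1 and p' = p + q − pq, and let X ~ Bernoulli(p)^ℕ, Y ~ Bernoulli(q)^ℕ be independent. Fix an integer k ≥ 1, let a_k = X_1 ⊕ X_2 ⊕ ⋯ ⊕ X_k (the parity of the first k coordinates of X, valued in {0,1}), and let ℓ_k = Σ_{i=1}^{k} max(X_i, Y_i). Then almost surely E[ a_k | σ(max(X,Y)) ] = (1 − (1 − 2p/p')^{ℓ_k}) / 2. -/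
open MeasureTheory ProbabilityTheory

namespace CPA

def bw (r : ℝ) (x : Bool) : ℝ := if x then r else 1 - r

lemma cylinder_measurableSet (s : Finset ℕ) (b : ℕ → Bool) :
    MeasurableSet {z : ℕ → Bool | ∀ i ∈ s, z i = b i} := by
  have : {z : ℕ → Bool | ∀ i ∈ s, z i = b i} = ⋂ i ∈ (s : Set ℕ), (fun z : ℕ → Bool => z i) ⁻¹' {b i} := by
    ext z; simp
  rw [this]
  exact MeasurableSet.biInter s.countable_toSet fun i _ =>
    (measurable_pi_apply i) (measurableSet_singleton _)

lemma isPiSystem_cylinders :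
    IsPiSystem {S : Set (ℕ → Bool) | ∃ (s : Finset ℕ) (b : ℕ → Bool), S = {z | ∀ i ∈ s, z i = b i}} := by
  rintro S ⟨s₁, b₁, rfl⟩ T ⟨s₂, b₂, rfl⟩ ⟨z₀, hz₁, hz₂⟩
  refine ⟨s₁ ∪ s₂, z₀, ?_⟩
  ext z
  simp only [Set.mem_inter_iff, Set.mem_setOf_eq, Finset.mem_union]
  constructor
  · rintro ⟨h1, h2⟩ i (hi | hi)
    · rw [h1 i hi, ← hz₁ i hi]
    · rw [h2 i hi, ← hz₂ i hi]
  · intro h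
    exact ⟨fun i hi => by rw [h i (Or.inl hi), hz₁ i hi],
      fun i hi => by rw [h i (Or.inr hi), hz₂ i hi]⟩

lemma pi_generateFrom_cylinders :
    (inferInstance : MeasurableSpace (ℕ → Bool)) = MeasurableSpace.generateFrom
      {S : Set (ℕ → Bool) | ∃ (s : Finset ℕ) (b : ℕ → Bool), S = {z | ∀ i ∈ s, z i = b i}} := by
  refine le_antisymm ?_ (MeasurableSpace.generateFrom_le ?_)
  · have hmeas : ∀ i : ℕ, @Measurable (ℕ → Bool) Bool
        (MeasurableSpace.generateFrom
          {S : Set (ℕ → Bool) | ∃ (s : Finset ℕ) (b : ℕ → Bool), S = {z | ∀ i ∈ s, z i = b i}}) _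
        (fun z => z i) := by
      intro i u _
      by_cases ht : true ∈ u <;> by_cases hf : false ∈ u
      · have : (fun z : ℕ → Bool => z i) ⁻¹' u = Set.univ := by
          ext z; simp only [Set.mem_preimage, Set.mem_univ, iff_true]; cases z i <;> assumption
        rw [this]; exact MeasurableSet.univ
      · have : (fun z : ℕ → Bool => z i) ⁻¹' u = {z | ∀ j ∈ ({i} : Finset ℕ), z j = (fun _ => true) j} := by
          ext z; simp only [Set.mem_preimage, Set.mem_setOf_eq, Finset.mem_singleton,
            forall_eq]
          cases z i <;> simp [ht, hf]
        rw [this]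
        exact MeasurableSpace.measurableSet_generateFrom ⟨{i}, fun _ => true, rfl⟩
      · have : (fun z : ℕ → Bool => z i) ⁻¹' u = {z | ∀ j ∈ ({i} : Finset ℕ), z j = (fun _ => false) j} := by
          ext z; simp only [Set.mem_preimage, Set.mem_setOf_eq, Finset.mem_singleton,
            forall_eq]
          cases z i <;> simp [ht, hf]
        rw [this]
        exact MeasurableSpace.measurableSet_generateFrom ⟨{i}, fun _ => false, rfl⟩
      · have : (fun z : ℕ → Bool => z i) ⁻¹' u = ∅ := by
          ext z; simp only [Set.mem_preimage, Set.mem_empty_iff_false, iff_false]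
          cases z i <;> assumption
        rw [this]; exact @MeasurableSet.empty _ (MeasurableSpace.generateFrom _)
    have hid : @Measurable (ℕ → Bool) (ℕ → Bool)
        (MeasurableSpace.generateFrom
          {S : Set (ℕ → Bool) | ∃ (s : Finset ℕ) (b : ℕ → Bool), S = {z | ∀ i ∈ s, z i = b i}})
        MeasurableSpace.pi id :=
      (@measurable_pi_iff (ℕ → Bool) ℕ (fun _ => Bool)
        (MeasurableSpace.generateFrom
          {S : Set (ℕ → Bool) | ∃ (s : Finset ℕ) (b : ℕ → Bool), S = {z | ∀ i ∈ s, z i = b i}})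
        (fun _ => inferInstance) id).mpr hmeas
    intro S hS
    simpa using hid hS
  · rintro S ⟨s, b, rfl⟩
    exact cylinder_measurableSet s b


lemma pair_cyl_measure {p q : ℝ} {μp μq : Measure (ℕ → Bool)}
    (hp0 : 0 ≤ p) (hp1 : p ≤ 1) (hq0 : 0 ≤ q) (hq1 : q ≤ 1)
    (hμp : IsBernoulliProduct p μp) (hμq : IsBernoulliProduct q μq)
    (t : Finset ℕ) (e : ℕ → Bool × Bool) :
    ((μp.prod μq) {ω : (ℕ → Bool) × (ℕ → Bool) | ∀ i ∈ t, (ω.1 i, ω.2 i) = e i}).toReal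
      = ∏ i ∈ t, (bw p (e i).1 * bw q (e i).2) := by
  haveI := hμp.1; haveI := hμq.1
  have hset : {ω : (ℕ → Bool) × (ℕ → Bool) | ∀ i ∈ t, (ω.1 i, ω.2 i) = e i}
      = {x : ℕ → Bool | ∀ i ∈ t, x i = (e i).1} ×ˢ {y : ℕ → Bool | ∀ i ∈ t, y i = (e i).2} := by
    ext ω
    simp only [Set.mem_setOf_eq, Set.mem_prod, Prod.ext_iff]
    constructor
    · intro h; exact ⟨fun i hi => (h i hi).1, fun i hi => (h i hi).2⟩
    · intro h i hi; exact ⟨h.1 i hi, h.2 i hi⟩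
  rw [hset, Measure.prod_prod, hμp.2 t (fun i => (e i).1), hμq.2 t (fun i => (e i).2),
    ENNReal.toReal_mul, ENNReal.toReal_prod, ENNReal.toReal_prod, ← Finset.prod_mul_distrib]
  refine Finset.prod_congr rfl fun i _ => ?_
  have h1p : (0:ℝ) ≤ 1 - p := by linarith
  have h1q : (0:ℝ) ≤ 1 - q := by linarith
  cases h1 : (e i).1 <;> cases h2 : (e i).2 <;>
    simp [bw, ENNReal.toReal_ofReal, hp0, hq0, h1p, h1q]

lemma prod_integral {p q : ℝ} {μp μq : Measure (ℕ → Bool)}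
    (hp0 : 0 ≤ p) (hp1 : p ≤ 1) (hq0 : 0 ≤ q) (hq1 : q ≤ 1)
    (hμp : IsBernoulliProduct p μp) (hμq : IsBernoulliProduct q μq)
    (t : Finset ℕ) (h : ℕ → Bool → Bool → ℝ) :
    ∫ ω : (ℕ → Bool) × (ℕ → Bool), (∏ i ∈ t, h i (ω.1 i) (ω.2 i)) ∂(μp.prod μq)
      = ∏ i ∈ t, ∑ e : Bool × Bool, h i e.1 e.2 * bw p e.1 * bw q e.2 := by
  haveI := hμp.1; haveI := hμq.1
  classical
  -- pointwise expansion of the product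
  have hpt : ∀ ω : (ℕ → Bool) × (ℕ → Bool),
      (∏ i ∈ t, h i (ω.1 i) (ω.2 i))
        = ∑ π ∈ t.pi (fun _ => (Finset.univ : Finset (Bool × Bool))),
            ∏ x ∈ t.attach,
              (if (ω.1 x.1, ω.2 x.1) = π x.1 x.2 then h x.1 (π x.1 x.2).1 (π x.1 x.2).2 else 0) := by
    intro ω
    have h1 : (∏ i ∈ t, h i (ω.1 i) (ω.2 i))
        = ∏ i ∈ t, ∑ e ∈ (Finset.univ : Finset (Bool × Bool)),
            (if (ω.1 i, ω.2 i) = e then h i e.1 e.2 else 0) := by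
      refine Finset.prod_congr rfl fun i _ => ?_
      rw [Finset.sum_ite_eq (Finset.univ : Finset (Bool × Bool)) (ω.1 i, ω.2 i)
        (fun e => h i e.1 e.2)]
      simp
    rw [h1, Finset.prod_sum]
  have hrw : (fun ω : (ℕ → Bool) × (ℕ → Bool) => ∏ i ∈ t, h i (ω.1 i) (ω.2 i))
      = fun ω => ∑ π ∈ t.pi (fun _ => (Finset.univ : Finset (Bool × Bool))),
          ∏ x ∈ t.attach,
            (if (ω.1 x.1, ω.2 x.1) = π x.1 x.2 then h x.1 (π x.1 x.2).1 (π x.1 x.2).2 else 0) :=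
    funext hpt
  rw [hrw]
  -- for each configuration π, the integrand is an indicator
  have hrw2 : (fun ω : (ℕ → Bool) × (ℕ → Bool) =>
      ∑ π ∈ t.pi (fun _ => (Finset.univ : Finset (Bool × Bool))),
        ∏ x ∈ t.attach,
          (if (ω.1 x.1, ω.2 x.1) = π x.1 x.2 then h x.1 (π x.1 x.2).1 (π x.1 x.2).2 else 0))
      = fun ω => ∑ π ∈ t.pi (fun _ => (Finset.univ : Finset (Bool × Bool))),
          Set.indicator {ω' : (ℕ → Bool) × (ℕ → Bool) |
              ∀ i ∈ t, (ω'.1 i, ω'.2 i) = (fun j => if hj : j ∈ t then π j hj else (false, false)) i}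
            (fun _ => ∏ x ∈ t.attach, h x.1 (π x.1 x.2).1 (π x.1 x.2).2) ω := by
    funext ω
    refine Finset.sum_congr rfl fun π hπ => ?_
    by_cases hω : ∀ i (hi : i ∈ t), (ω.1 i, ω.2 i) = π i hi
    · rw [Set.indicator_of_mem (by intro i hi; simp only [dif_pos hi]; exact hω i hi)]
      exact Finset.prod_congr rfl fun x _ => if_pos (hω x.1 x.2)
    · push_neg at hω
      obtain ⟨i, hi, hne⟩ := hω
      rw [Set.indicator_of_notMem (by
        intro hmem
        have := hmem i hi
        simp only [dif_pos hi] at this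
        exact hne this)]
      exact Finset.prod_eq_zero (Finset.mem_attach t ⟨i, hi⟩) (if_neg hne)
  rw [hrw2]
  have hBmeas : ∀ e : ℕ → Bool × Bool,
      MeasurableSet {ω : (ℕ → Bool) × (ℕ → Bool) | ∀ i ∈ t, (ω.1 i, ω.2 i) = e i} := by
    intro e
    have : {ω : (ℕ → Bool) × (ℕ → Bool) | ∀ i ∈ t, (ω.1 i, ω.2 i) = e i}
        = ⋂ i ∈ (t : Set ℕ), (fun ω : (ℕ → Bool) × (ℕ → Bool) => (ω.1 i, ω.2 i)) ⁻¹' {e i} := by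
      ext ω; simp
    rw [this]
    refine MeasurableSet.biInter t.countable_toSet fun i _ => ?_
    have hpair : Measurable (fun ω : (ℕ → Bool) × (ℕ → Bool) => (ω.1 i, ω.2 i)) :=
      (measurable_fst.eval).prodMk (measurable_snd.eval)
    exact hpair (measurableSet_singleton _)
  rw [integral_finset_sum _ (fun π _ =>
    (integrable_const _).indicator (hBmeas _))]
  have hterm : ∀ π ∈ t.pi (fun _ => (Finset.univ : Finset (Bool × Bool))),
      (∫ ω, Set.indicator {ω' : (ℕ → Bool) × (ℕ → Bool) |
          ∀ i ∈ t, (ω'.1 i, ω'.2 i) = (fun j => if hj : j ∈ t then π j hj else (false, false)) i}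
        (fun _ => ∏ x ∈ t.attach, h x.1 (π x.1 x.2).1 (π x.1 x.2).2) ω ∂(μp.prod μq))
      = ∏ x ∈ t.attach, (h x.1 (π x.1 x.2).1 (π x.1 x.2).2
          * bw p (π x.1 x.2).1 * bw q (π x.1 x.2).2) := by
    intro π hπ
    rw [integral_indicator_const _ (hBmeas _), measureReal_def,
      pair_cyl_measure hp0 hp1 hq0 hq1 hμp hμq t
        (fun j => if hj : j ∈ t then π j hj else (false, false))]
    rw [smul_eq_mul, mul_comm, ← Finset.prod_attach t
      (fun j => bw p ((if hj : j ∈ t then π j hj else (false, false))).1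
        * bw q ((if hj : j ∈ t then π j hj else (false, false))).2)]
    rw [← Finset.prod_mul_distrib]
    refine Finset.prod_congr rfl fun x _ => ?_
    rw [dif_pos x.2]
    ring
  rw [Finset.sum_congr rfl hterm]
  rw [show (∏ i ∈ t, ∑ e : Bool × Bool, h i e.1 e.2 * bw p e.1 * bw q e.2)
      = ∏ i ∈ t, ∑ e ∈ (Finset.univ : Finset (Bool × Bool)),
          (fun i (e : Bool × Bool) => h i e.1 e.2 * bw p e.1 * bw q e.2) i e from rfl,
    Finset.prod_sum]


def indC (s : Finset ℕ) (b : ℕ → Bool) (i : ℕ) (x y : Bool) : ℝ :=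
  if i ∈ s then (if max x y = b i then 1 else 0) else 1

def Hf (k : ℕ) (s : Finset ℕ) (b : ℕ → Bool) (i : ℕ) (x y : Bool) : ℝ :=
  (if i ∈ Finset.range k then (1 - 2 * (x.toNat : ℝ)) else 1) * indC s b i x y

def Hg (c : ℝ) (k : ℕ) (s : Finset ℕ) (b : ℕ → Bool) (i : ℕ) (x y : Bool) : ℝ :=
  (if i ∈ Finset.range k then c ^ ((max x y).toNat) else 1) * indC s b i x y

lemma abs_indC_le_one (s : Finset ℕ) (b : ℕ → Bool) (i : ℕ) (x y : Bool) :
    |indC s b i x y| ≤ 1 := by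
  unfold indC
  split_ifs <;> simp

lemma abs_Hf_le_one (k : ℕ) (s : Finset ℕ) (b : ℕ → Bool) (i : ℕ) (x y : Bool) :
    |Hf k s b i x y| ≤ 1 := by
  unfold Hf
  rw [abs_mul]
  have h1 : |if i ∈ Finset.range k then (1 - 2 * (x.toNat : ℝ)) else 1| ≤ 1 := by
    split_ifs
    · cases x <;> norm_num
    · norm_num
  calc |if i ∈ Finset.range k then (1 - 2 * (x.toNat : ℝ)) else 1| * |indC s b i x y|
      ≤ 1 * 1 := mul_le_mul h1 (abs_indC_le_one s b i x y) (abs_nonneg _) zero_le_one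
    _ = 1 := mul_one 1

lemma abs_Hg_le_one {c : ℝ} (hc : |c| ≤ 1) (k : ℕ) (s : Finset ℕ) (b : ℕ → Bool) (i : ℕ)
    (x y : Bool) : |Hg c k s b i x y| ≤ 1 := by
  unfold Hg
  rw [abs_mul]
  have h1 : |if i ∈ Finset.range k then c ^ ((max x y).toNat) else 1| ≤ 1 := by
    split_ifs
    · rw [abs_pow]; exact pow_le_one₀ (abs_nonneg c) hc
    · norm_num
  calc _ ≤ 1 * 1 := mul_le_mul h1 (abs_indC_le_one s b i x y) (abs_nonneg _) zero_le_one
    _ = 1 := mul_one 1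

lemma integrable_prod_h {μp μq : Measure (ℕ → Bool)}
    [IsFiniteMeasure μp] [IsFiniteMeasure μq]
    (t : Finset ℕ) (h : ℕ → Bool → Bool → ℝ) (hb : ∀ i x y, |h i x y| ≤ 1) :
    Integrable (fun ω : (ℕ → Bool) × (ℕ → Bool) => ∏ i ∈ t, h i (ω.1 i) (ω.2 i)) (μp.prod μq) := by
  have hmeas : Measurable (fun ω : (ℕ → Bool) × (ℕ → Bool) => ∏ i ∈ t, h i (ω.1 i) (ω.2 i)) := by
    refine Finset.measurable_prod t fun i _ => ?_
    have hpair : Measurable (fun ω : (ℕ → Bool) × (ℕ → Bool) => (ω.1 i, ω.2 i)) :=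
      (measurable_fst.eval).prodMk (measurable_snd.eval)
    exact (measurable_of_countable (fun xy : Bool × Bool => h i xy.1 xy.2)).comp hpair
  refine (integrable_const (1:ℝ)).mono' hmeas.aestronglyMeasurable (ae_of_all _ fun ω => ?_)
  rw [Real.norm_eq_abs, Finset.abs_prod]
  exact Finset.prod_le_one (fun i _ => abs_nonneg _) (fun i _ => hb i _ _)

lemma parity_eq (k : ℕ) (x : ℕ → Bool) :
    (if (∑ i ∈ Finset.range k, (x i).toNat) % 2 = 1 then (1:ℝ) else 0)
      = (1 - ∏ i ∈ Finset.range k, (1 - 2 * ((x i).toNat : ℝ))) / 2 := by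
  have h1 : ∏ i ∈ Finset.range k, (1 - 2 * ((x i).toNat : ℝ))
      = (-1 : ℝ) ^ (∑ i ∈ Finset.range k, (x i).toNat) := by
    rw [← Finset.prod_pow_eq_pow_sum]
    refine Finset.prod_congr rfl fun i _ => ?_
    cases x i <;> norm_num
  rw [h1]
  rcases Nat.even_or_odd (∑ i ∈ Finset.range k, (x i).toNat) with he | ho
  · rw [he.neg_one_pow, if_neg (by rw [Nat.even_iff] at he; omega)]
    norm_num
  · rw [ho.neg_one_pow, if_pos (by rw [Nat.odd_iff] at ho; omega)]
    norm_num

lemma cyl_integral_eq {p q : ℝ} {μp μq : Measure (ℕ → Bool)}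
    (hp : 0 < p) (hp1 : p < 1) (hq : 0 < q) (hq1 : q < 1)
    (hμp : IsBernoulliProduct p μp) (hμq : IsBernoulliProduct q μq)
    (k : ℕ) (s : Finset ℕ) (b : ℕ → Bool) :
    ∫ ω in {ω : (ℕ → Bool) × (ℕ → Bool) | ∀ i ∈ s, max (ω.1 i) (ω.2 i) = b i},
        (if (∑ i ∈ Finset.range k, ((ω.1 i).toNat)) % 2 = 1 then (1:ℝ) else 0) ∂(μp.prod μq)
      = ∫ ω in {ω : (ℕ → Bool) × (ℕ → Bool) | ∀ i ∈ s, max (ω.1 i) (ω.2 i) = b i},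
        ((1 - (1 - 2 * p / (p + q - p * q)) ^
          (∑ i ∈ Finset.range k, (max (ω.1 i) (ω.2 i)).toNat)) / 2) ∂(μp.prod μq) := by
  haveI := hμp.1; haveI := hμq.1
  classical
  set c : ℝ := 1 - 2 * p / (p + q - p * q) with hc
  have hp' : 0 < p + q - p * q := by nlinarith
  have hple : p ≤ p + q - p * q := by nlinarith
  have habsc : |c| ≤ 1 := by
    rw [abs_le]
    constructor
    · rw [hc]
      have : 2 * p / (p + q - p * q) ≤ 2 := by
        rw [div_le_iff₀ hp']; nlinarith
      linarith
    · rw [hc]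
      have : 0 ≤ 2 * p / (p + q - p * q) := by positivity
      linarith
  set t : Finset ℕ := s ∪ Finset.range k with ht
  set A : Set ((ℕ → Bool) × (ℕ → Bool)) :=
    {ω | ∀ i ∈ s, max (ω.1 i) (ω.2 i) = b i} with hAdef
  have hA : MeasurableSet A := by
    have : A = ⋂ i ∈ (s : Set ℕ),
        (fun ω : (ℕ → Bool) × (ℕ → Bool) => max (ω.1 i) (ω.2 i)) ⁻¹' {b i} := by
      ext ω; simp [hAdef]
    rw [this]
    refine MeasurableSet.biInter s.countable_toSet fun i _ => ?_
    have hpair : Measurable (fun ω : (ℕ → Bool) × (ℕ → Bool) => (ω.1 i, ω.2 i)) :=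
      (measurable_fst.eval).prodMk (measurable_snd.eval)
    exact ((measurable_of_countable (fun xy : Bool × Bool => max xy.1 xy.2)).comp hpair)
      (measurableSet_singleton _)
  -- the two pointwise identities
  have claim1 : ∀ ω : (ℕ → Bool) × (ℕ → Bool),
      A.indicator (fun ω => if (∑ i ∈ Finset.range k, ((ω.1 i).toNat)) % 2 = 1 then (1:ℝ) else 0) ω
        = ((∏ i ∈ t, indC s b i (ω.1 i) (ω.2 i)) - ∏ i ∈ t, Hf k s b i (ω.1 i) (ω.2 i)) / 2 := by
    intro ω
    by_cases hω : ω ∈ A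
    · rw [Set.indicator_of_mem hω]
      have hind : ∀ i ∈ t, indC s b i (ω.1 i) (ω.2 i) = 1 := by
        intro i _
        by_cases his : i ∈ s
        · simp [indC, his, hω i his]
        · simp [indC, his]
      have h1 : ∏ i ∈ t, indC s b i (ω.1 i) (ω.2 i) = 1 := Finset.prod_eq_one hind
      have h2 : ∏ i ∈ t, Hf k s b i (ω.1 i) (ω.2 i)
          = ∏ i ∈ Finset.range k, (1 - 2 * (((ω.1 i).toNat) : ℝ)) := by
        unfold Hf
        rw [Finset.prod_mul_distrib, Finset.prod_congr rfl (fun i hi => hind i hi), Finset.prod_const_one,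
          mul_one, Finset.prod_ite_mem, ht, Finset.union_inter_cancel_right]
      rw [h1, h2, parity_eq]
    · rw [Set.indicator_of_notMem hω]
      have : ∃ i ∈ s, max (ω.1 i) (ω.2 i) ≠ b i := by
        by_contra hcon
        push_neg at hcon
        exact hω hcon
      obtain ⟨i, his, hne⟩ := this
      have hne' : (ω.1 i || ω.2 i) ≠ b i := by simpa using hne
      have hit : i ∈ t := Finset.mem_union_left _ his
      have h1 : ∏ i ∈ t, indC s b i (ω.1 i) (ω.2 i) = 0 :=
        Finset.prod_eq_zero hit (by simp [indC, his, hne'])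
      have h2 : ∏ i ∈ t, Hf k s b i (ω.1 i) (ω.2 i) = 0 :=
        Finset.prod_eq_zero hit (by simp [Hf, indC, his, hne'])
      rw [h1, h2]
      norm_num
  have claim2 : ∀ ω : (ℕ → Bool) × (ℕ → Bool),
      A.indicator (fun ω => (1 - c ^
          (∑ i ∈ Finset.range k, (max (ω.1 i) (ω.2 i)).toNat)) / 2) ω
        = ((∏ i ∈ t, indC s b i (ω.1 i) (ω.2 i)) - ∏ i ∈ t, Hg c k s b i (ω.1 i) (ω.2 i)) / 2 := by
    intro ω
    by_cases hω : ω ∈ A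
    · rw [Set.indicator_of_mem hω]
      have hind : ∀ i ∈ t, indC s b i (ω.1 i) (ω.2 i) = 1 := by
        intro i _
        by_cases his : i ∈ s
        · simp [indC, his, hω i his]
        · simp [indC, his]
      have h1 : ∏ i ∈ t, indC s b i (ω.1 i) (ω.2 i) = 1 := Finset.prod_eq_one hind
      have h2 : ∏ i ∈ t, Hg c k s b i (ω.1 i) (ω.2 i)
          = c ^ (∑ i ∈ Finset.range k, (max (ω.1 i) (ω.2 i)).toNat) := by
        unfold Hg
        rw [Finset.prod_mul_distrib, Finset.prod_congr rfl (fun i hi => hind i hi), Finset.prod_const_one,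
          mul_one, Finset.prod_ite_mem, ht, Finset.union_inter_cancel_right,
          Finset.prod_pow_eq_pow_sum]
      rw [h1, h2]
    · rw [Set.indicator_of_notMem hω]
      have : ∃ i ∈ s, max (ω.1 i) (ω.2 i) ≠ b i := by
        by_contra hcon
        push_neg at hcon
        exact hω hcon
      obtain ⟨i, his, hne⟩ := this
      have hne' : (ω.1 i || ω.2 i) ≠ b i := by simpa using hne
      have hit : i ∈ t := Finset.mem_union_left _ his
      have h1 : ∏ i ∈ t, indC s b i (ω.1 i) (ω.2 i) = 0 :=
        Finset.prod_eq_zero hit (by simp [indC, his, hne'])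
      have h2 : ∏ i ∈ t, Hg c k s b i (ω.1 i) (ω.2 i) = 0 :=
        Finset.prod_eq_zero hit (by simp [Hg, indC, his, hne'])
      rw [h1, h2]
      norm_num
  have hintF := integrable_prod_h (μp := μp) (μq := μq) t (indC s b) (abs_indC_le_one s b)
  have hintHf := integrable_prod_h (μp := μp) (μq := μq) t (Hf k s b) (abs_Hf_le_one k s b)
  have hintHg := integrable_prod_h (μp := μp) (μq := μq) t (Hg c k s b) (abs_Hg_le_one habsc k s b)
  have hp0 := hp.le
  have hq0 := hq.le
  have hp1' := hp1.le
  have hq1' := hq1.le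
  calc ∫ ω in A, (if (∑ i ∈ Finset.range k, ((ω.1 i).toNat)) % 2 = 1 then (1:ℝ) else 0) ∂(μp.prod μq)
      = ∫ ω, A.indicator
          (fun ω => if (∑ i ∈ Finset.range k, ((ω.1 i).toNat)) % 2 = 1 then (1:ℝ) else 0) ω
          ∂(μp.prod μq) := (integral_indicator hA).symm
    _ = ∫ ω, ((∏ i ∈ t, indC s b i (ω.1 i) (ω.2 i))
          - ∏ i ∈ t, Hf k s b i (ω.1 i) (ω.2 i)) / 2 ∂(μp.prod μq) := by
        exact integral_congr_ae (Filter.Eventually.of_forall claim1)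
    _ = ((∫ ω, ∏ i ∈ t, indC s b i (ω.1 i) (ω.2 i) ∂(μp.prod μq))
          - ∫ ω, ∏ i ∈ t, Hf k s b i (ω.1 i) (ω.2 i) ∂(μp.prod μq)) / 2 := by
        rw [integral_div, integral_sub hintF hintHf]
    _ = ((∏ i ∈ t, ∑ e : Bool × Bool, indC s b i e.1 e.2 * bw p e.1 * bw q e.2)
          - ∏ i ∈ t, ∑ e : Bool × Bool, Hf k s b i e.1 e.2 * bw p e.1 * bw q e.2) / 2 := by
        rw [prod_integral hp0 hp1' hq0 hq1' hμp hμq, prod_integral hp0 hp1' hq0 hq1' hμp hμq]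
    _ = ((∏ i ∈ t, ∑ e : Bool × Bool, indC s b i e.1 e.2 * bw p e.1 * bw q e.2)
          - ∏ i ∈ t, ∑ e : Bool × Bool, Hg c k s b i e.1 e.2 * bw p e.1 * bw q e.2) / 2 := by
        congr 2
        refine Finset.prod_congr rfl fun i _ => ?_
        have hne' : p + q - p * q ≠ 0 := ne_of_gt hp'
        rw [Fintype.sum_prod_type, Fintype.sum_prod_type]
        by_cases hik : i ∈ Finset.range k <;> by_cases his : i ∈ s
        · by_cases hbi : b i
          · simp only [Fintype.sum_bool, Hf, Hg, indC, bw, hik, his, hbi, if_true, if_false]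
            norm_num
            rw [hc]
            field_simp
            ring
          · simp only [Fintype.sum_bool, Hf, Hg, indC, bw, hik, his, hbi, if_true, if_false]
            norm_num
        · simp only [Fintype.sum_bool, Hf, Hg, indC, bw, hik, his, if_true, if_false, Bool.false_eq_true,
            Bool.max_eq_or, Bool.or_true, Bool.or_false, Bool.toNat_true, Bool.toNat_false, Nat.cast_one,
            Nat.cast_zero, pow_one, pow_zero]
          rw [hc]
          field_simp
          ring
        · simp [Hf, Hg, hik]
        · simp [Hf, Hg, hik]
    _ = ((∫ ω, ∏ i ∈ t, indC s b i (ω.1 i) (ω.2 i) ∂(μp.prod μq))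
          - ∫ ω, ∏ i ∈ t, Hg c k s b i (ω.1 i) (ω.2 i) ∂(μp.prod μq)) / 2 := by
        rw [prod_integral hp0 hp1' hq0 hq1' hμp hμq, prod_integral hp0 hp1' hq0 hq1' hμp hμq]
    _ = ∫ ω, ((∏ i ∈ t, indC s b i (ω.1 i) (ω.2 i))
          - ∏ i ∈ t, Hg c k s b i (ω.1 i) (ω.2 i)) / 2 ∂(μp.prod μq) := by
        rw [integral_div, integral_sub hintF hintHg]
    _ = ∫ ω, A.indicator (fun ω => (1 - c ^
          (∑ i ∈ Finset.range k, (max (ω.1 i) (ω.2 i)).toNat)) / 2) ω ∂(μp.prod μq) :=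
        (integral_congr_ae (Filter.Eventually.of_forall claim2)).symm
    _ = _ := integral_indicator hA

end CPA

open CPA

/-- With `X ~ Bernoulli(p)^ℕ` and `Y ~ Bernoulli(q)^ℕ` independent and `p' = p + q - pq`,
the conditional expectation of the parity `a_k` of the first `k` coordinates of `X` given
`σ(max(X,Y))` equals `(1 - (1 - 2p/p')^{ℓ_k})/2` a.s., where `ℓ_k = Σ_{i<k} max(X_i,Y_i)`. -/
theorem condexp_parity (p q : ℝ) (hp : 0 < p) (hp1 : p < 1) (hq : 0 < q) (hq1 : q < 1)
    (μp μq : Measure (ℕ → Bool))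
    (hμp : IsBernoulliProduct p μp) (hμq : IsBernoulliProduct q μq)
    (k : ℕ) (hk : 1 ≤ k) :
    (μp.prod μq)[(fun ω : (ℕ → Bool) × (ℕ → Bool) =>
        if (∑ i ∈ Finset.range k, (ω.1 i).toNat) % 2 = 1 then (1:ℝ) else 0) |
      MeasurableSpace.comap
        (fun ω : (ℕ → Bool) × (ℕ → Bool) => fun i => max (ω.1 i) (ω.2 i)) inferInstance]
      =ᵐ[μp.prod μq]
    fun ω => (1 - (1 - 2 * p / (p + q - p * q)) ^
        (∑ i ∈ Finset.range k, (max (ω.1 i) (ω.2 i)).toNat)) / 2 := by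
  classical
  haveI := hμp.1; haveI := hμq.1
  set μ : Measure ((ℕ → Bool) × (ℕ → Bool)) := μp.prod μq with hμdef
  set Z : (ℕ → Bool) × (ℕ → Bool) → (ℕ → Bool) :=
    fun ω => fun i => max (ω.1 i) (ω.2 i) with hZdef
  set c : ℝ := 1 - 2 * p / (p + q - p * q) with hcdef
  set f : (ℕ → Bool) × (ℕ → Bool) → ℝ :=
    fun ω => if (∑ i ∈ Finset.range k, (ω.1 i).toNat) % 2 = 1 then (1:ℝ) else 0 with hfdef
  set g : (ℕ → Bool) × (ℕ → Bool) → ℝ :=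
    fun ω => (1 - c ^ (∑ i ∈ Finset.range k, (max (ω.1 i) (ω.2 i)).toNat)) / 2 with hgdef
  have hp' : 0 < p + q - p * q := by nlinarith
  have habsc : |c| ≤ 1 := by
    rw [abs_le]
    constructor
    · rw [hcdef]
      have : 2 * p / (p + q - p * q) ≤ 2 := by
        rw [div_le_iff₀ hp']; nlinarith
      linarith
    · rw [hcdef]
      have : 0 ≤ 2 * p / (p + q - p * q) := by positivity
      linarith
  have hcn : ∀ n : ℕ, -1 ≤ c ^ n ∧ c ^ n ≤ 1 := by
    intro n
    have : |c ^ n| ≤ 1 := by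
      rw [abs_pow]; exact pow_le_one₀ (abs_nonneg c) habsc
    exact ⟨(abs_le.mp this).1, (abs_le.mp this).2⟩
  -- measurability
  have hZ : Measurable Z := by
    refine measurable_pi_lambda _ fun i => ?_
    have hpair : Measurable (fun ω : (ℕ → Bool) × (ℕ → Bool) => (ω.1 i, ω.2 i)) :=
      (measurable_fst.eval).prodMk (measurable_snd.eval)
    exact (measurable_of_countable (fun xy : Bool × Bool => max xy.1 xy.2)).comp hpair
  have hsum1 : Measurable (fun ω : (ℕ → Bool) × (ℕ → Bool) =>
      ∑ i ∈ Finset.range k, (ω.1 i).toNat) :=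
    Finset.measurable_sum _ fun i _ => (measurable_of_countable Bool.toNat).comp measurable_fst.eval
  have hfm : Measurable f := by
    have : f = (fun n : ℕ => if n % 2 = 1 then (1:ℝ) else 0) ∘
        (fun ω : (ℕ → Bool) × (ℕ → Bool) => ∑ i ∈ Finset.range k, (ω.1 i).toNat) := rfl
    rw [this]
    exact measurable_from_top.comp hsum1
  have hGsum : Measurable (fun z : ℕ → Bool => ∑ i ∈ Finset.range k, (z i).toNat) :=
    Finset.measurable_sum _ fun i _ => (measurable_of_countable Bool.toNat).comp (measurable_pi_apply i)
  have hG : Measurable (fun z : ℕ → Bool => (1 - c ^ (∑ i ∈ Finset.range k, (z i).toNat)) / 2) := by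
    have : (fun z : ℕ → Bool => (1 - c ^ (∑ i ∈ Finset.range k, (z i).toNat)) / 2)
        = (fun n : ℕ => (1 - c ^ n) / 2) ∘ (fun z => ∑ i ∈ Finset.range k, (z i).toNat) := rfl
    rw [this]
    exact measurable_from_top.comp hGsum
  have hgm : Measurable g := by
    have : g = (fun z : ℕ → Bool => (1 - c ^ (∑ i ∈ Finset.range k, (z i).toNat)) / 2) ∘ Z := rfl
    rw [this]
    exact hG.comp hZ
  -- bounds and integrability
  have hf0 : ∀ ω, 0 ≤ f ω := by
    intro ω; rw [hfdef]; dsimp only; split_ifs <;> norm_num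
  have hg0 : ∀ ω, 0 ≤ g ω := by
    intro ω; rw [hgdef]; dsimp only
    have := (hcn (∑ i ∈ Finset.range k, (max (ω.1 i) (ω.2 i)).toNat)).2
    linarith
  have hfi : Integrable f μ := by
    refine (integrable_const (1:ℝ)).mono' hfm.aestronglyMeasurable (ae_of_all _ fun ω => ?_)
    rw [Real.norm_eq_abs, hfdef]; dsimp only; split_ifs <;> norm_num
  have hgi : Integrable g μ := by
    refine (integrable_const (1:ℝ)).mono' hgm.aestronglyMeasurable (ae_of_all _ fun ω => ?_)
    rw [Real.norm_eq_abs, hgdef]; dsimp only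
    have h1 := (hcn (∑ i ∈ Finset.range k, (max (ω.1 i) (ω.2 i)).toNat)).1
    have h2 := (hcn (∑ i ∈ Finset.range k, (max (ω.1 i) (ω.2 i)).toNat)).2
    rw [abs_of_nonneg (by linarith)]
    linarith
  have hm : MeasurableSpace.comap Z inferInstance ≤
      (inferInstance : MeasurableSpace ((ℕ → Bool) × (ℕ → Bool))) := hZ.comap_le
  -- the weighted pushforward measures
  set νf : Measure (ℕ → Bool) := (μ.withDensity (fun ω => ENNReal.ofReal (f ω))).map Z with hνf
  set νg : Measure (ℕ → Bool) := (μ.withDensity (fun ω => ENNReal.ofReal (g ω))).map Z with hνg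
  have hνapp : ∀ (h : (ℕ → Bool) × (ℕ → Bool) → ℝ) (S : Set (ℕ → Bool)), MeasurableSet S →
      ((μ.withDensity (fun ω => ENNReal.ofReal (h ω))).map Z) S
        = ∫⁻ ω in Z ⁻¹' S, ENNReal.ofReal (h ω) ∂μ := by
    intro h S hS
    rw [Measure.map_apply hZ hS, withDensity_apply _ (hZ hS)]
  have hreal : ∀ (h : (ℕ → Bool) × (ℕ → Bool) → ℝ), Integrable h μ → (∀ ω, 0 ≤ h ω) →
      ∀ (S : Set (ℕ → Bool)), MeasurableSet S →
      ((μ.withDensity (fun ω => ENNReal.ofReal (h ω))).map Z) S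
        = ENNReal.ofReal (∫ ω in Z ⁻¹' S, h ω ∂μ) := by
    intro h hi h0 S hS
    rw [hνapp h S hS, ← ofReal_integral_eq_lintegral_ofReal hi.restrict
      (Filter.Eventually.of_forall h0)]
  have hpre : ∀ (s : Finset ℕ) (b : ℕ → Bool),
      Z ⁻¹' {z : ℕ → Bool | ∀ i ∈ s, z i = b i}
        = {ω : (ℕ → Bool) × (ℕ → Bool) | ∀ i ∈ s, max (ω.1 i) (ω.2 i) = b i} := fun _ _ => rfl
  have hsame : ∀ S ∈ {S : Set (ℕ → Bool) |
      ∃ (s : Finset ℕ) (b : ℕ → Bool), S = {z | ∀ i ∈ s, z i = b i}}, νf S = νg S := by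
    rintro S ⟨s, b, rfl⟩
    rw [hνf, hνg, hreal f hfi hf0 _ (cylinder_measurableSet s b),
      hreal g hgi hg0 _ (cylinder_measurableSet s b), hpre]
    exact congrArg ENNReal.ofReal (cyl_integral_eq hp hp1 hq hq1 hμp hμq k s b)
  haveI : IsFiniteMeasure νf := by
    constructor
    rw [hνf, hνapp f _ MeasurableSet.univ]
    refine lt_of_le_of_lt (lintegral_mono fun ω => ?_) (?_ : ∫⁻ _, 1 ∂(μ.restrict _) < ⊤)
    · exact ENNReal.ofReal_le_one.mpr (by rw [hfdef]; dsimp only; split_ifs <;> norm_num)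
    · simp [lintegral_one]
  haveI : IsFiniteMeasure νg := by
    constructor
    rw [hνg, hνapp g _ MeasurableSet.univ]
    refine lt_of_le_of_lt (lintegral_mono fun ω => ?_) (?_ : ∫⁻ _, 1 ∂(μ.restrict _) < ⊤)
    · refine ENNReal.ofReal_le_one.mpr ?_
      rw [hgdef]; dsimp only
      have := (hcn (∑ i ∈ Finset.range k, (max (ω.1 i) (ω.2 i)).toNat)).1
      linarith
    · simp [lintegral_one]
  have hunivmem : (Set.univ : Set (ℕ → Bool)) ∈ {S : Set (ℕ → Bool) |
      ∃ (s : Finset ℕ) (b : ℕ → Bool), S = {z | ∀ i ∈ s, z i = b i}} :=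
    ⟨∅, fun _ => false, by ext z; simp⟩
  have key : νf = νg :=
    ext_of_generate_finite _ pi_generateFrom_cylinders isPiSystem_cylinders hsame
      (hsame _ hunivmem)
  -- conclude via uniqueness of conditional expectation
  have hgsm : AEStronglyMeasurable[MeasurableSpace.comap Z inferInstance] g μ := by
    refine ⟨g, ?_, Filter.EventuallyEq.rfl⟩
    have hZm : @Measurable _ _ (MeasurableSpace.comap Z inferInstance) _ Z :=
      measurable_iff_comap_le.mpr le_rfl
    have : @Measurable _ _ (MeasurableSpace.comap Z inferInstance) _ g := by
      have hgc : g = (fun z : ℕ → Bool =>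
          (1 - c ^ (∑ i ∈ Finset.range k, (z i).toNat)) / 2) ∘ Z := rfl
      rw [hgc]
      exact hG.comp hZm
    exact this.stronglyMeasurable
  have heq : ∀ S' : Set ((ℕ → Bool) × (ℕ → Bool)),
      MeasurableSet[MeasurableSpace.comap Z inferInstance] S' → μ S' < ⊤ →
      ∫ ω in S', g ω ∂μ = ∫ ω in S', f ω ∂μ := by
    rintro S' ⟨S, hS, rfl⟩ _
    have h1 : ENNReal.ofReal (∫ ω in Z ⁻¹' S, f ω ∂μ) = νf S :=
      (hreal f hfi hf0 S hS).symm
    have h2 : ENNReal.ofReal (∫ ω in Z ⁻¹' S, g ω ∂μ) = νg S :=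
      (hreal g hgi hg0 S hS).symm
    have h3 : ENNReal.ofReal (∫ ω in Z ⁻¹' S, g ω ∂μ)
        = ENNReal.ofReal (∫ ω in Z ⁻¹' S, f ω ∂μ) := by rw [h1, h2, key]
    have h4 := congrArg ENNReal.toReal h3
    rwa [ENNReal.toReal_ofReal (setIntegral_nonneg (hZ hS) fun ω _ => hg0 ω),
      ENNReal.toReal_ofReal (setIntegral_nonneg (hZ hS) fun ω _ => hf0 ω)] at h4
  exact (ae_eq_condExp_of_forall_setIntegral_eq hm hfi
    (fun S' _ _ => hgi.integrableOn) heq hgsm).symm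
end
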